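/- Let S be a fundamental Boolean inverse ∧-monoid satisfying axioms (F1), (F2) and (F3), and let t be a non-trivial involution in S. Then W_t = U(σ(t)), where U(σ(t)) = {g ∈ U(S) : σ(g) ≤ σ(t)}. -/

import Mathlib

universe u

/-- An inverse monoid with zero: every element `a` has a unique generalized
inverse `a⁻¹`, and `0` is an absorbing element. -/
class InverseMonoidWithZero (S : Type u) extends Monoid S, Zero S, Inv S where
  zero_mul' : ∀ a : S, 0 * a = 0
  mul_zero' : ∀ a : S, a * 0 = 0
  mul_inv_mul : ∀ a : S, a * a⁻¹ * a = a
  inv_mul_inv : ∀ a : S, a⁻¹ * a * a⁻¹ = a⁻¹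
  inv_unique : ∀ a b : S, a * b * a = a → b * a * b = b → b = a⁻¹

section BasicDefs

variable {S : Type u}

/-- The natural partial order: `a ≤ b` iff `a = e * b` for some idempotent `e`. -/
def nle [InverseMonoidWithZero S] (a b : S) : Prop :=
  ∃ e : S, e * e = e ∧ a = e * b

/-- `a` and `b` are compatible if `a * b⁻¹` and `a⁻¹ * b` are idempotents. -/
def Compat [InverseMonoidWithZero S] (a b : S) : Prop :=
  (a * b⁻¹) * (a * b⁻¹) = a * b⁻¹ ∧ (a⁻¹ * b) * (a⁻¹ * b) = a⁻¹ * b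

/-- `a` and `b` are orthogonal if `a * b⁻¹ = 0` and `a⁻¹ * b = 0`. -/
def Orth [InverseMonoidWithZero S] (a b : S) : Prop :=
  a * b⁻¹ = 0 ∧ a⁻¹ * b = 0

end BasicDefs

/-- A distributive inverse monoid: every compatible pair has a join (for the
natural partial order), recorded by `sup`, and multiplication distributes over
these binary joins. -/
class DistributiveInverseMonoid (S : Type u) extends InverseMonoidWithZero S where
  sup : S → S → S
  le_sup_left : ∀ a b : S, Compat a b → nle a (sup a b)
  le_sup_right : ∀ a b : S, Compat a b → nle b (sup a b)
  sup_le : ∀ a b c : S, Compat a b → nle a c → nle b c → nle (sup a b) c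
  mul_sup : ∀ a b c : S, Compat a b → c * sup a b = sup (c * a) (c * b)
  sup_mul : ∀ a b c : S, Compat a b → sup a b * c = sup (a * c) (b * c)

/-- A Boolean inverse monoid: a distributive inverse monoid whose idempotents
form a Boolean algebra under the natural partial order; `compl` records the
complementation on idempotents. -/
class BooleanInverseMonoid (S : Type u) extends DistributiveInverseMonoid S where
  compl : S → S
  compl_idem : ∀ e : S, e * e = e → compl e * compl e = compl e
  mul_compl : ∀ e : S, e * e = e → e * compl e = 0
  sup_compl : ∀ e : S, e * e = e → sup e (compl e) = 1

/-- A Boolean inverse ∧-monoid: a Boolean inverse monoid in which every pair of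
elements has a meet with respect to the natural partial order. -/
class BooleanInverseMeetMonoid (S : Type u) extends BooleanInverseMonoid S where
  inf : S → S → S
  inf_le_left : ∀ a b : S, nle (inf a b) a
  inf_le_right : ∀ a b : S, nle (inf a b) b
  le_inf : ∀ a b c : S, nle c a → nle c b → nle c (inf a b)

section MoreDefs

variable {S : Type u}

/-- The join of a compatible pair. -/
def bsup [DistributiveInverseMonoid S] (a b : S) : S := DistributiveInverseMonoid.sup a b

/-- Complementation in the Boolean algebra of idempotents. -/
def bcompl [BooleanInverseMonoid S] (e : S) : S := BooleanInverseMonoid.compl e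

/-- The binary meet. -/
def binf [BooleanInverseMeetMonoid S] (a b : S) : S := BooleanInverseMeetMonoid.inf a b

/-- The fixed-point operator `φ(s) = s ∧ 1`. -/
def phi [BooleanInverseMeetMonoid S] (s : S) : S := binf s 1

/-- The support operator `σ(s) = \overline{φ(s)} ⋅ s⁻¹ s`. -/
def sigma [BooleanInverseMeetMonoid S] (s : S) : S := bcompl (phi s) * (s⁻¹ * s)

/-- An infinitesimal is a non-zero element that squares to zero. -/
def Infinitesimal [InverseMonoidWithZero S] (a : S) : Prop := a ≠ 0 ∧ a * a = 0

/-- A (two-sided) ideal. -/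
def IsMIdeal [InverseMonoidWithZero S] (I : Set S) : Prop :=
  I.Nonempty ∧ ∀ a ∈ I, ∀ s : S, s * a ∈ I ∧ a * s ∈ I

/-- A ∨-ideal: an ideal closed under joins of compatible pairs. -/
def IsVIdeal [DistributiveInverseMonoid S] (I : Set S) : Prop :=
  IsMIdeal I ∧ ∀ a ∈ I, ∀ b ∈ I, Compat a b → bsup a b ∈ I

end MoreDefs

/-- 0-simplifying: the only ∨-ideals are `{0}` and `S`. -/
def ZeroSimplifying (S : Type u) [DistributiveInverseMonoid S] : Prop :=
  ∀ I : Set S, IsVIdeal I → I = {0} ∨ I = Set.univ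

/-- 0-simple: non-trivial and the only ideals are `{0}` and `S`. -/
def ZeroSimple (S : Type u) [InverseMonoidWithZero S] : Prop :=
  (∃ s : S, s ≠ 0) ∧ ∀ I : Set S, IsMIdeal I → I = {0} ∨ I = Set.univ

/-- Fundamental: every element commuting with all idempotents is an idempotent. -/
def Fundamental (S : Type u) [InverseMonoidWithZero S] : Prop :=
  ∀ a : S, (∀ e : S, e * e = e → a * e = e * a) → a * a = a

/-- The Boolean algebra of idempotents is atomless. -/
def IdemAtomless (S : Type u) [InverseMonoidWithZero S] : Prop :=
  ∀ e : S, e * e = e → e ≠ 0 → ∃ f : S, f * f = f ∧ f ≠ 0 ∧ nle f e ∧ f ≠ e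

section Filters

variable {S : Type u}

/-- A filter in a Boolean inverse ∧-monoid: a nonempty subset closed under
binary meets and upward closed in the natural partial order. -/
def IsMFilter [BooleanInverseMeetMonoid S] (A : Set S) : Prop :=
  A.Nonempty ∧ (∀ a ∈ A, ∀ b ∈ A, binf a b ∈ A) ∧ ∀ a ∈ A, ∀ b : S, nle a b → b ∈ A

/-- An ultrafilter: a maximal proper filter. -/
def IsMUltrafilter [BooleanInverseMeetMonoid S] (A : Set S) : Prop :=
  IsMFilter A ∧ (0 : S) ∉ A ∧ ∀ B : Set S, IsMFilter B → (0 : S) ∉ B → A ⊆ B → A = B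

/-- A filter of the Boolean algebra of idempotents (meet of idempotents is
their product). -/
def IsIdemFilter [InverseMonoidWithZero S] (F : Set S) : Prop :=
  F.Nonempty ∧ (∀ e ∈ F, e * e = e) ∧ (∀ e ∈ F, ∀ f ∈ F, e * f ∈ F) ∧
    ∀ e ∈ F, ∀ f : S, f * f = f → nle e f → f ∈ F

/-- An ultrafilter of the Boolean algebra of idempotents. -/
def IsIdemUltrafilter [InverseMonoidWithZero S] (F : Set S) : Prop :=
  IsIdemFilter F ∧ (0 : S) ∉ F ∧
    ∀ G : Set S, IsIdemFilter G → (0 : S) ∉ G → F ⊆ G → F = G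

end Filters

section PencilDefs

variable {S : Type u}

/-- `Preceq e f`: there is a pencil from `e` to `f`, i.e. finitely many
elements `x₁, …, xₘ` with `r(xᵢ) ≤ f` for all `i` and `e = ⋁ d(xᵢ)`
(a least upper bound for the natural partial order). -/
def Preceq [DistributiveInverseMonoid S] (e f : S) : Prop :=
  ∃ l : List S, l ≠ [] ∧ (∀ x ∈ l, nle (x * x⁻¹) f) ∧
    (∀ x ∈ l, nle (x⁻¹ * x) e) ∧ ∀ c : S, (∀ x ∈ l, nle (x⁻¹ * x) c) → nle e c

/-- Piecewise factorizable: every element is a finite join of elements each of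
which lies beneath a unit. -/
def PiecewiseFactorizable (S : Type u) [DistributiveInverseMonoid S] : Prop :=
  ∀ s : S, ∃ l : List S, l ≠ [] ∧ (∀ x ∈ l, ∃ g : S, IsUnit g ∧ nle x g) ∧
    (∀ x ∈ l, nle x s) ∧ ∀ c : S, (∀ x ∈ l, nle x c) → nle s c

/-- A properly infinite idempotent. -/
def ProperlyInfinite [DistributiveInverseMonoid S] (e : S) : Prop :=
  ∃ x y : S, x⁻¹ * x = e ∧ y⁻¹ * y = e ∧ Orth (x * x⁻¹) (y * y⁻¹) ∧
    nle (bsup (x * x⁻¹) (y * y⁻¹)) e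

end PencilDefs

/-- Purely infinite: every non-zero idempotent is properly infinite. -/
def PurelyInfinite (S : Type u) [DistributiveInverseMonoid S] : Prop :=
  ∀ e : S, e * e = e → e ≠ 0 → ProperlyInfinite e

section Statement19

variable {S : Type u}

/-- Conjugation of a set of idempotents by an element. -/
def conjSet [InverseMonoidWithZero S] (g : S) (F : Set S) : Set S :=
  (fun f => g * f * g⁻¹) '' F

/-- Axiom (F1): enough involutions. -/
def AxF1 (S : Type u) [BooleanInverseMeetMonoid S] : Prop :=
  ∀ F : Set S, IsIdemUltrafilter F → ∀ e ∈ F,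
    ∃ t : S, IsUnit t ∧ t * t = 1 ∧ t ≠ 1 ∧ sigma t ∈ F ∧ nle (sigma t) e

/-- Axiom (F2): shrinking. -/
def AxF2 (S : Type u) [BooleanInverseMeetMonoid S] : Prop :=
  ∀ t : S, IsUnit t → t * t = 1 → t ≠ 1 →
    ∀ e : S, e * e = e → e ≠ 0 → nle e (sigma t) →
      ∃ g : S, IsUnit g ∧ g ≠ 1 ∧ nle (sigma g) (bsup e (t * e * t)) ∧
        ∀ F : Set S, IsIdemUltrafilter F → sigma g ∈ F →
          conjSet g F = (fun f => t * f * t) '' F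

/-- Axiom (F3): enough non-involutions. -/
def AxF3 (S : Type u) [BooleanInverseMeetMonoid S] : Prop :=
  ∀ e : S, e * e = e → e ≠ 0 → ∃ g : S, IsUnit g ∧ g * g ≠ 1 ∧ nle (sigma g) e

/-- `C_t`: the centralizer of `t` in the group of units. -/
def Cset [BooleanInverseMeetMonoid S] (t : S) : Set S :=
  {a : S | IsUnit a ∧ a * t = t * a}

/-- `Z_t = {s ∈ C_t : s² = 1, [s, a s a⁻¹] = 1 for all a ∈ C_t}`. -/
def Zset [BooleanInverseMeetMonoid S] (t : S) : Set S :=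
  {s : S | s ∈ Cset t ∧ s * s = 1 ∧
    ∀ a ∈ Cset t, s * (a * s * a⁻¹) = (a * s * a⁻¹) * s}

/-- `S_t = {a² : a ∈ U(S), [a, s] = 1 for all s ∈ Z_t}`. -/
def Sset [BooleanInverseMeetMonoid S] (t : S) : Set S :=
  {b : S | ∃ a : S, IsUnit a ∧ b = a * a ∧ ∀ s ∈ Zset t, a * s = s * a}

/-- `W_t = {a ∈ U(S) : [a, b] = 1 for all b ∈ S_t}`. -/
def Wset [BooleanInverseMeetMonoid S] (t : S) : Set S :=
  {a : S | IsUnit a ∧ ∀ b ∈ Sset t, a * b = b * a}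

section Aux

variable {S : Type u} [BooleanInverseMeetMonoid S]

/-! ### Basic inverse monoid lemmas -/

lemma imul (a : S) : a * a⁻¹ * a = a := InverseMonoidWithZero.mul_inv_mul a
lemma iinv (a : S) : a⁻¹ * a * a⁻¹ = a⁻¹ := InverseMonoidWithZero.inv_mul_inv a
lemma iuniq {a b : S} (h1 : a * b * a = a) (h2 : b * a * b = b) : b = a⁻¹ :=
  InverseMonoidWithZero.inv_unique a b h1 h2
lemma zmul (a : S) : (0 : S) * a = 0 := InverseMonoidWithZero.zero_mul' a
lemma mulz (a : S) : a * (0 : S) = 0 := InverseMonoidWithZero.mul_zero' a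

lemma mulpair {p q r x : S} (h : p * q = r) : p * (q * x) = r * x := by
  rw [← mul_assoc, h]

lemma inv_invS (a : S) : a⁻¹⁻¹ = a := (iuniq (iinv a) (imul a)).symm

lemma idem_inv {e : S} (he : e * e = e) : e⁻¹ = e :=
  (iuniq (by rw [he, he]) (by rw [he, he])).symm

lemma dom_idem (a : S) : (a⁻¹ * a) * (a⁻¹ * a) = a⁻¹ * a := by
  rw [mul_assoc, ← mul_assoc a a⁻¹ a, imul]

lemma ran_idem (a : S) : (a * a⁻¹) * (a * a⁻¹) = a * a⁻¹ := by
  rw [mul_assoc, ← mul_assoc a⁻¹ a a⁻¹, iinv]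

lemma zero_idem : (0 : S) * 0 = 0 := zmul 0

lemma one_idem : (1 : S) * 1 = 1 := one_mul 1

lemma inv_zero' : (0 : S)⁻¹ = 0 := idem_inv zero_idem

lemma inv_one' : (1 : S)⁻¹ = 1 := idem_inv one_idem

lemma idem_mul_idem {e f : S} (he : e * e = e) (hf : f * f = f) :
    (e * f) * (e * f) = e * f := by
  set x := (e * f)⁻¹ with hx
  have h1 : (e * f) * (f * x * e) * (e * f) = e * f := by
    have : (e * f) * (f * x * e) * (e * f) = e * ((f * f) * x * (e * e)) * f := by
      simp only [mul_assoc]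
    rw [this, hf, he]
    have : e * (f * x * e) * f = (e * f) * x * (e * f) := by simp only [mul_assoc]
    rw [this, hx, imul]
  have h2 : (f * x * e) * (e * f) * (f * x * e) = f * x * e := by
    have : (f * x * e) * (e * f) * (f * x * e) = f * (x * ((e * e) * (f * f)) * x) * e := by
      simp only [mul_assoc]
    rw [this, he, hf]
    have : x * (e * f) * x = x := by rw [hx, iinv]
    rw [show x * (e * f) * x = x from this]
  have hfx : f * x * e = x := by rw [iuniq h1 h2, ← hx]
  have hxx : x * x = x := by
    have h3 : (f * x * e) * (f * x * e) = x * x := by rw [hfx]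
    rw [← h3]
    have h4 : (f * x * e) * (f * x * e) = f * (x * (e * f) * x) * e := by
      simp only [mul_assoc]
    rw [h4, hx, iinv, hfx]
  have hefx : e * f = x := by
    calc e * f = ((e * f)⁻¹)⁻¹ := (inv_invS _).symm
    _ = x := by rw [← hx, idem_inv hxx]
  rw [hefx, hxx]

lemma idem_comm {e f : S} (he : e * e = e) (hf : f * f = f) : e * f = f * e := by
  have hef := idem_mul_idem he hf
  have hfe := idem_mul_idem hf he
  have h1 : (e * f) * (f * e) * (e * f) = e * f := by
    calc (e * f) * (f * e) * (e * f) = e * ((f * f) * ((e * e) * f)) := by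
          simp only [mul_assoc]
    _ = e * (f * (e * f)) := by rw [hf, he]
    _ = (e * f) * (e * f) := by simp only [mul_assoc]
    _ = e * f := hef
  have h2 : (f * e) * (e * f) * (f * e) = f * e := by
    calc (f * e) * (e * f) * (f * e) = f * ((e * e) * ((f * f) * e)) := by
          simp only [mul_assoc]
    _ = f * (e * (f * e)) := by rw [he, hf]
    _ = (f * e) * (f * e) := by simp only [mul_assoc]
    _ = f * e := hfe
  have := iuniq h1 h2
  rw [this, idem_inv hef]

lemma mul_inv_rev' (a b : S) : (a * b)⁻¹ = b⁻¹ * a⁻¹ := by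
  refine (iuniq ?_ ?_).symm
  · calc (a * b) * (b⁻¹ * a⁻¹) * (a * b) = a * ((b * b⁻¹) * ((a⁻¹ * a) * b)) := by
          simp only [mul_assoc]
    _ = a * ((b * b⁻¹) * (a⁻¹ * a)) * b := by simp only [mul_assoc]
    _ = a * ((a⁻¹ * a) * (b * b⁻¹)) * b := by rw [idem_comm (ran_idem b) (dom_idem a)]
    _ = (a * a⁻¹ * a) * ((b * b⁻¹) * b) := by simp only [mul_assoc]
    _ = a * b := by rw [imul, imul]
  · calc (b⁻¹ * a⁻¹) * (a * b) * (b⁻¹ * a⁻¹) = b⁻¹ * ((a⁻¹ * a) * (b * b⁻¹)) * a⁻¹ := by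
          simp only [mul_assoc]
    _ = b⁻¹ * ((b * b⁻¹) * (a⁻¹ * a)) * a⁻¹ := by rw [idem_comm (ran_idem b) (dom_idem a)]
    _ = (b⁻¹ * b * b⁻¹) * (a⁻¹ * a * a⁻¹) := by simp only [mul_assoc]
    _ = b⁻¹ * a⁻¹ := by rw [iinv, iinv]

lemma conj_idem {x : S} (hx : x * x = x) (g : S) :
    (g * x * g⁻¹) * (g * x * g⁻¹) = g * x * g⁻¹ := by
  calc (g * x * g⁻¹) * (g * x * g⁻¹) = g * (x * (g⁻¹ * g)) * (x * g⁻¹) := by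
        simp only [mul_assoc]
  _ = g * ((g⁻¹ * g) * x) * (x * g⁻¹) := by rw [idem_comm hx (dom_idem g)]
  _ = (g * g⁻¹ * g) * (x * x) * g⁻¹ := by simp only [mul_assoc]
  _ = g * x * g⁻¹ := by rw [imul, hx]

/-! ### nle basics -/

lemma nle_refl (a : S) : nle a a := ⟨a * a⁻¹, ran_idem a, (imul a).symm⟩

lemma nle_zero (a : S) : nle 0 a := ⟨0, zero_idem, (zmul a).symm⟩

lemma idem_nle_one {e : S} (he : e * e = e) : nle e 1 := ⟨e, he, (mul_one e).symm⟩

lemma nle_ran {a b : S} (h : nle a b) : a = (a * a⁻¹) * b := by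
  obtain ⟨e, he, rfl⟩ := h
  rw [mul_inv_rev', idem_inv he]
  calc e * b = (e * e) * (b * b⁻¹ * b) := by rw [he, imul]
  _ = e * ((e * (b * b⁻¹)) * b) := by simp only [mul_assoc]
  _ = e * (((b * b⁻¹) * e) * b) := by rw [idem_comm he (ran_idem b)]
  _ = e * b * (b⁻¹ * e) * b := by simp only [mul_assoc]

lemma nle_dom {a b : S} (h : nle a b) : a = b * (a⁻¹ * a) := by
  obtain ⟨e, he, rfl⟩ := h
  rw [mul_inv_rev', idem_inv he]
  calc e * b = e * (b * b⁻¹ * b) := by rw [imul]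
  _ = (e * (b * b⁻¹)) * b := by simp only [mul_assoc]
  _ = ((b * b⁻¹) * e) * b := by rw [idem_comm he (ran_idem b)]
  _ = b * (b⁻¹ * ((e * e) * b)) := by rw [he]; simp only [mul_assoc]
  _ = b * (b⁻¹ * e * (e * b)) := by simp only [mul_assoc]

lemma nle_of_right_idem {a b f : S} (hf : f * f = f) (h : a = b * f) : nle a b := by
  subst h
  refine ⟨b * f * b⁻¹, ?_, ?_⟩
  · calc (b * f * b⁻¹) * (b * f * b⁻¹) = b * (f * (b⁻¹ * b)) * (f * b⁻¹) := by
          simp only [mul_assoc]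
    _ = b * ((b⁻¹ * b) * f) * (f * b⁻¹) := by rw [idem_comm hf (dom_idem b)]
    _ = (b * b⁻¹ * b) * (f * f) * b⁻¹ := by simp only [mul_assoc]
    _ = b * f * b⁻¹ := by rw [imul, hf]
  · calc b * f = (b * b⁻¹ * b) * f := by rw [imul]
    _ = b * ((b⁻¹ * b) * f) := by simp only [mul_assoc]
    _ = b * (f * (b⁻¹ * b)) := by rw [idem_comm (dom_idem b) hf]
    _ = (b * f * b⁻¹) * b := by simp only [mul_assoc]

lemma nle_right {a b : S} (h : nle a b) : ∃ f : S, f * f = f ∧ a = b * f :=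
  ⟨a⁻¹ * a, dom_idem a, nle_dom h⟩

lemma nle_trans {a b c : S} (h1 : nle a b) (h2 : nle b c) : nle a c := by
  obtain ⟨e, he, rfl⟩ := h1
  obtain ⟨f, hf, rfl⟩ := h2
  exact ⟨e * f, idem_mul_idem he hf, by rw [mul_assoc]⟩

lemma nle_antisymm {a b : S} (h1 : nle a b) (h2 : nle b a) : a = b := by
  have ha := nle_ran h1
  have hb := nle_ran h2
  have hbinv : b⁻¹ = a⁻¹ * (b * b⁻¹) := by
    calc b⁻¹ = ((b * b⁻¹) * a)⁻¹ := by rw [← hb]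
    _ = a⁻¹ * (b * b⁻¹)⁻¹ := mul_inv_rev' _ _
    _ = a⁻¹ * (b * b⁻¹) := by rw [idem_inv (ran_idem b)]
  have hbb : b * b⁻¹ = (b * b⁻¹) * (a * a⁻¹) := by
    calc b * b⁻¹ = ((b * b⁻¹) * a) * (a⁻¹ * (b * b⁻¹)) := by rw [← hbinv, ← hb]
    _ = (b * b⁻¹) * ((a * a⁻¹) * (b * b⁻¹)) := by simp only [mul_assoc]
    _ = (b * b⁻¹) * ((b * b⁻¹) * (a * a⁻¹)) := by rw [idem_comm (ran_idem a) (ran_idem b)]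
    _ = ((b * b⁻¹) * (b * b⁻¹)) * (a * a⁻¹) := by simp only [mul_assoc]
    _ = (b * b⁻¹) * (a * a⁻¹) := by rw [ran_idem]
  have hainv : a⁻¹ = b⁻¹ * (a * a⁻¹) := by
    calc a⁻¹ = ((a * a⁻¹) * b)⁻¹ := by rw [← ha]
    _ = b⁻¹ * (a * a⁻¹)⁻¹ := mul_inv_rev' _ _
    _ = b⁻¹ * (a * a⁻¹) := by rw [idem_inv (ran_idem a)]
  have haa : a * a⁻¹ = (a * a⁻¹) * (b * b⁻¹) := by
    calc a * a⁻¹ = ((a * a⁻¹) * b) * (b⁻¹ * (a * a⁻¹)) := by rw [← hainv, ← ha]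
    _ = (a * a⁻¹) * ((b * b⁻¹) * (a * a⁻¹)) := by simp only [mul_assoc]
    _ = (a * a⁻¹) * ((a * a⁻¹) * (b * b⁻¹)) := by rw [idem_comm (ran_idem b) (ran_idem a)]
    _ = ((a * a⁻¹) * (a * a⁻¹)) * (b * b⁻¹) := by simp only [mul_assoc]
    _ = (a * a⁻¹) * (b * b⁻¹) := by rw [ran_idem]
  have key : a * a⁻¹ = b * b⁻¹ := by
    rw [haa, idem_comm (ran_idem a) (ran_idem b), ← hbb]
  rw [ha, key]; exact imul b

lemma nle_mul_left {a b : S} (c : S) (h : nle a b) : nle (c * a) (c * b) := by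
  obtain ⟨e, he, rfl⟩ := h
  refine ⟨c * e * c⁻¹, conj_idem he c, ?_⟩
  calc c * (e * b) = (c * c⁻¹ * c) * (e * b) := by rw [imul]
  _ = c * ((c⁻¹ * c) * e) * b := by simp only [mul_assoc]
  _ = c * (e * (c⁻¹ * c)) * b := by rw [idem_comm (dom_idem c) he]
  _ = (c * e * c⁻¹) * (c * b) := by simp only [mul_assoc]

lemma nle_mul_right {a b : S} (h : nle a b) (c : S) : nle (a * c) (b * c) := by
  obtain ⟨f, hf, rfl⟩ := nle_right h
  have hcfc : (c⁻¹ * f * c) * (c⁻¹ * f * c) = c⁻¹ * f * c := by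
    have := conj_idem hf c⁻¹
    rwa [inv_invS] at this
  refine nle_of_right_idem hcfc ?_
  calc b * f * c = (b * f) * (c * c⁻¹ * c) := by rw [imul]
  _ = b * (f * (c * c⁻¹)) * c := by simp only [mul_assoc]
  _ = b * ((c * c⁻¹) * f) * c := by rw [idem_comm hf (ran_idem c)]
  _ = (b * c) * (c⁻¹ * f * c) := by simp only [mul_assoc]

lemma nle_inv {a b : S} (h : nle a b) : nle a⁻¹ b⁻¹ := by
  obtain ⟨e, he, rfl⟩ := h
  rw [mul_inv_rev', idem_inv he]
  exact nle_of_right_idem he rfl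

lemma nle_idem_iff {e f : S} (he : e * e = e) (hf : f * f = f) :
    nle e f ↔ e * f = e := by
  constructor
  · rintro ⟨E, hE, rfl⟩
    rw [mul_assoc, hf]
  · intro h
    exact ⟨e, he, h.symm⟩

/-! ### units -/

lemma unit_inv_eq {g u : S} (h1 : g * u = 1) (h2 : u * g = 1) : u = g⁻¹ :=
  iuniq (by rw [h1, one_mul]) (by rw [h2, one_mul])

lemma unit_r {g : S} (hg : IsUnit g) : g * g⁻¹ = 1 := by
  obtain ⟨b, h1, h2⟩ := isUnit_iff_exists.mp hg
  rw [← unit_inv_eq h1 h2, h1]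

lemma unit_l {g : S} (hg : IsUnit g) : g⁻¹ * g = 1 := by
  obtain ⟨b, h1, h2⟩ := isUnit_iff_exists.mp hg
  rw [← unit_inv_eq h1 h2, h2]

lemma unit_inv_isUnit {g : S} (hg : IsUnit g) : IsUnit g⁻¹ :=
  isUnit_iff_exists.mpr ⟨g, unit_l hg, unit_r hg⟩

lemma idem_unit_eq_one {e : S} (he : e * e = e) (hu : IsUnit e) : e = 1 := by
  have := unit_r hu
  rw [idem_inv he, he] at this
  exact this

/-! ### Compat and sup basics -/

lemma compat_idem {e f : S} (he : e * e = e) (hf : f * f = f) : Compat e f := by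
  unfold Compat
  rw [idem_inv hf, idem_inv he]
  exact ⟨idem_mul_idem he hf, idem_mul_idem he hf⟩

lemma compat_symm {a b : S} (h : Compat a b) : Compat b a := by
  obtain ⟨h1, h2⟩ := h
  constructor
  · have : b * a⁻¹ = (a * b⁻¹)⁻¹ := by rw [mul_inv_rev', inv_invS]
    rw [this, idem_inv h1]; exact h1
  · have : b⁻¹ * a = (a⁻¹ * b)⁻¹ := by rw [mul_inv_rev', inv_invS]
    rw [this, idem_inv h2]; exact h2

lemma compat_zero_right (a : S) : Compat a 0 := by
  constructor
  · rw [inv_zero', mulz, zmul]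
  · rw [mulz, zmul]

lemma compat_zero_left (a : S) : Compat 0 a := compat_symm (compat_zero_right a)

lemma le_bsup_left {a b : S} (h : Compat a b) : nle a (bsup a b) :=
  DistributiveInverseMonoid.le_sup_left a b h

lemma le_bsup_right {a b : S} (h : Compat a b) : nle b (bsup a b) :=
  DistributiveInverseMonoid.le_sup_right a b h

lemma bsup_le {a b c : S} (h : Compat a b) (h1 : nle a c) (h2 : nle b c) :
    nle (bsup a b) c :=
  DistributiveInverseMonoid.sup_le a b c h h1 h2

lemma mul_bsup {a b : S} (c : S) (h : Compat a b) : c * bsup a b = bsup (c * a) (c * b) :=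
  DistributiveInverseMonoid.mul_sup a b c h

lemma bsup_mul {a b : S} (c : S) (h : Compat a b) : bsup a b * c = bsup (a * c) (b * c) :=
  DistributiveInverseMonoid.sup_mul a b c h

lemma bsup_comm {a b : S} (h : Compat a b) : bsup a b = bsup b a := by
  have h' := compat_symm h
  exact nle_antisymm
    (bsup_le h (le_bsup_right h') (le_bsup_left h'))
    (bsup_le h' (le_bsup_right h) (le_bsup_left h))

lemma bsup_zero (a : S) : bsup a 0 = a :=
  nle_antisymm (bsup_le (compat_zero_right a) (nle_refl a) (nle_zero a))
    (le_bsup_left (compat_zero_right a))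

lemma zero_bsup (a : S) : bsup 0 a = a := by
  rw [bsup_comm (compat_zero_left a), bsup_zero]

lemma bsup_absorb {e x : S} (he : e * e = e) (hx : x * x = x) (h : x * e = x) :
    bsup e x = e :=
  nle_antisymm (bsup_le (compat_idem he hx) (nle_refl e) ((nle_idem_iff hx he).mpr h))
    (le_bsup_left (compat_idem he hx))

lemma bsup_absorb' {e x : S} (he : e * e = e) (hx : x * x = x) (h : x * e = x) :
    bsup x e = e := by
  rw [bsup_comm (compat_idem hx he)]; exact bsup_absorb he hx h

lemma bsup_idem {e f : S} (he : e * e = e) (hf : f * f = f) :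
    (bsup e f) * (bsup e f) = bsup e f := by
  have hc := compat_idem he hf
  rw [bsup_mul _ hc, mul_bsup _ hc, mul_bsup _ hc]
  have h1 : bsup (e * e) (e * f) = e := by
    rw [he]; exact bsup_absorb he (idem_mul_idem he hf)
      (by rw [mul_assoc, idem_comm hf he, ← mul_assoc, he])
  have h2 : bsup (f * e) (f * f) = f := by
    rw [hf]; exact bsup_absorb' hf (idem_mul_idem hf he)
      (by rw [mul_assoc, idem_comm he hf, ← mul_assoc, hf])
  rw [h1, h2]

lemma idem_nle_bsup_left {e f : S} (he : e * e = e) (hf : f * f = f) :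
    e * bsup e f = e :=
  (nle_idem_iff he (bsup_idem he hf)).mp (le_bsup_left (compat_idem he hf))

lemma idem_nle_bsup_right {e f : S} (he : e * e = e) (hf : f * f = f) :
    f * bsup e f = f :=
  (nle_idem_iff hf (bsup_idem he hf)).mp (le_bsup_right (compat_idem he hf))

/-! ### complement basics -/

lemma compl_idem' {e : S} (he : e * e = e) : bcompl e * bcompl e = bcompl e :=
  BooleanInverseMonoid.compl_idem e he

lemma mul_compl' {e : S} (he : e * e = e) : e * bcompl e = 0 :=
  BooleanInverseMonoid.mul_compl e he

lemma compl_mul' {e : S} (he : e * e = e) : bcompl e * e = 0 := by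
  rw [idem_comm (compl_idem' he) he, mul_compl' he]

lemma bsup_compl' {e : S} (he : e * e = e) : bsup e (bcompl e) = 1 :=
  BooleanInverseMonoid.sup_compl e he

lemma mul_partition {e : S} (he : e * e = e) (x : S) :
    x = bsup (x * e) (x * bcompl e) := by
  rw [← mul_bsup x (compat_idem he (compl_idem' he)), bsup_compl' he, mul_one]

lemma partition_mul {e : S} (he : e * e = e) (x : S) :
    x = bsup (e * x) (bcompl e * x) := by
  rw [← bsup_mul x (compat_idem he (compl_idem' he)), bsup_compl' he, one_mul]

lemma nle_compl_of_mul_zero {e x : S} (he : e * e = e) (h : x * e = 0) :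
    x * bcompl e = x := by
  have := mul_partition he x
  rwa [h, zero_bsup, eq_comm] at this

lemma nle_of_mul_compl_zero {e x : S} (he : e * e = e) (h : x * bcompl e = 0) :
    x * e = x := by
  have := mul_partition he x
  rwa [h, bsup_zero, eq_comm] at this

lemma bcompl_unique {e x : S} (he : e * e = e) (hx : x * x = x)
    (h1 : x * e = 0) (h2 : bsup e x = 1) : x = bcompl e := by
  have hxc : x * bcompl e = x := nle_compl_of_mul_zero he h1
  have hcx : bcompl e * x = bcompl e := by
    have : bcompl e * bsup e x = bcompl e := by rw [h2, mul_one]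
    rwa [mul_bsup _ (compat_idem he hx), compl_mul' he, zero_bsup] at this
  rw [← hxc, idem_comm hx (compl_idem' he), hcx]

lemma compl_compl' {e : S} (he : e * e = e) : bcompl (bcompl e) = e := by
  refine (bcompl_unique (compl_idem' he) he (mul_compl' he) ?_).symm
  rw [bsup_comm (compat_idem (compl_idem' he) he)]
  exact bsup_compl' he

lemma compl_one : bcompl (1 : S) = 0 := by
  have := mul_compl' (one_idem (S := S))
  rwa [one_mul] at this

lemma compl_zero : bcompl (0 : S) = 1 := by
  have := bsup_compl' (zero_idem (S := S))
  rwa [zero_bsup] at this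

lemma bcompl_antitone {e f : S} (he : e * e = e) (hf : f * f = f) (h : e * f = e) :
    bcompl f * bcompl e = bcompl f := by
  have h0 : bcompl f * e = 0 := by
    rw [← h, idem_comm he hf, ← mul_assoc, compl_mul' hf, zmul]
  exact nle_compl_of_mul_zero he h0

lemma eq_one_of_compl_zero {e : S} (he : e * e = e) (h : bcompl e = 0) : e = 1 := by
  have := bsup_compl' he
  rwa [h, bsup_zero] at this

lemma eq_zero_of_compl_one {e : S} (he : e * e = e) (h : bcompl e = 1) : e = 0 := by
  have := mul_compl' he
  rwa [h, mul_one] at this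

/-! ### filters and ultrafilters -/

lemma filt_idem {F : Set S} (hF : IsIdemFilter F) {e : S} (he : e ∈ F) : e * e = e :=
  hF.2.1 e he

lemma filt_mul {F : Set S} (hF : IsIdemFilter F) {e f : S} (he : e ∈ F) (hf : f ∈ F) :
    e * f ∈ F :=
  hF.2.2.1 e he f hf

lemma filt_up {F : Set S} (hF : IsIdemFilter F) {e f : S} (he : e ∈ F)
    (hf : f * f = f) (h : nle e f) : f ∈ F :=
  hF.2.2.2 e he f hf h

lemma filt_up' {F : Set S} (hF : IsIdemFilter F) {e f : S} (he : e ∈ F)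
    (hf : f * f = f) (h : e * f = e) : f ∈ F :=
  filt_up hF he hf ((nle_idem_iff (filt_idem hF he) hf).mpr h)

lemma filt_one {F : Set S} (hF : IsIdemFilter F) : (1 : S) ∈ F := by
  obtain ⟨e, he⟩ := hF.1
  exact filt_up hF he one_idem (idem_nle_one (filt_idem hF he))

lemma uf_filt {F : Set S} (hF : IsIdemUltrafilter F) : IsIdemFilter F := hF.1

lemma uf_zero {F : Set S} (hF : IsIdemUltrafilter F) : (0 : S) ∉ F := hF.2.1

lemma uf_max {F : Set S} (hF : IsIdemUltrafilter F) {G : Set S} (hG : IsIdemFilter G)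
    (hG0 : (0 : S) ∉ G) (h : F ⊆ G) : F = G :=
  hF.2.2 G hG hG0 h

lemma uf_mem_ne_zero {F : Set S} (hF : IsIdemUltrafilter F) {e : S} (he : e ∈ F) :
    e ≠ 0 := fun h => hF.2.1 (h ▸ he)

lemma exists_ultrafilter {e : S} (he : e * e = e) (h0 : e ≠ 0) :
    ∃ F : Set S, IsIdemUltrafilter F ∧ e ∈ F := by
  set P : Set (Set S) := {G | IsIdemFilter G ∧ (0 : S) ∉ G ∧ e ∈ G} with hP
  have hF0 : {f : S | f * f = f ∧ e * f = e} ∈ P := by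
    refine ⟨⟨⟨e, he, he⟩, fun f hf => hf.1, ?_, ?_⟩, ?_, he, he⟩
    · rintro f ⟨hf, hef⟩ f' ⟨hf', hef'⟩
      exact ⟨idem_mul_idem hf hf', by rw [← mul_assoc, hef, hef']⟩
    · rintro f ⟨hf, hef⟩ f' hf' hle
      refine ⟨hf', ?_⟩
      rw [← hef, mul_assoc, (nle_idem_iff hf hf').mp hle]
    · rintro ⟨_, h⟩
      rw [mulz] at h
      exact h0 h.symm
  have hchain : ∀ c ⊆ P, IsChain (· ⊆ ·) c → c.Nonempty → ∃ ub ∈ P, ∀ s ∈ c, s ⊆ ub := by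
    intro c hc hchain ⟨G0, hG0⟩
    refine ⟨⋃₀ c, ⟨⟨⟨e, G0, hG0, (hc hG0).2.2⟩, ?_, ?_, ?_⟩, ?_, ⟨G0, hG0, (hc hG0).2.2⟩⟩,
      fun s hs => Set.subset_sUnion_of_mem hs⟩
    · rintro f ⟨G, hG, hfG⟩
      exact filt_idem (hc hG).1 hfG
    · rintro f ⟨G, hG, hfG⟩ f' ⟨G', hG', hfG'⟩
      rcases hchain.total hG hG' with h | h
      · exact ⟨G', hG', filt_mul (hc hG').1 (h hfG) hfG'⟩
      · exact ⟨G, hG, filt_mul (hc hG).1 hfG (h hfG')⟩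
    · rintro f ⟨G, hG, hfG⟩ f' hf' hle
      exact ⟨G, hG, filt_up (hc hG).1 hfG hf' hle⟩
    · rintro ⟨G, hG, h0G⟩
      exact (hc hG).2.1 h0G
  obtain ⟨M, hFM, hMP, hMmax⟩ := zorn_subset_nonempty P hchain _ hF0
  refine ⟨M, ⟨hMP.1, hMP.2.1, ?_⟩, hMP.2.2⟩
  intro G hG hG0 hMG
  exact ((hMmax (y := G) ⟨hG, hG0, hMG hMP.2.2⟩ hMG)).antisymm hMG |>.symm

lemma compl_mem_of_not_mem {F : Set S} (hF : IsIdemUltrafilter F) {e : S}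
    (he : e * e = e) (h : e ∉ F) : bcompl e ∈ F := by
  by_cases hex : ∃ f ∈ F, f * e = 0
  · obtain ⟨f, hfF, hfe⟩ := hex
    exact filt_up' (uf_filt hF) hfF (compl_idem' he) (nle_compl_of_mul_zero he hfe)
  · push_neg at hex
    exfalso
    set G : Set S := {x | x * x = x ∧ ∃ f ∈ F, nle (f * e) x} with hG
    have hGfilt : IsIdemFilter G := by
      refine ⟨⟨e, he, 1, filt_one (uf_filt hF), by rw [one_mul]; exact nle_refl e⟩,
        fun x hx => hx.1, ?_, ?_⟩
      · rintro x ⟨hx, f, hfF, hfx⟩ x' ⟨hx', f', hfF', hfx'⟩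
        refine ⟨idem_mul_idem hx hx', f * f', filt_mul (uf_filt hF) hfF hfF', ?_⟩
        have key : (f * f') * e = (f * e) * (f' * e) := by
          have hfi := filt_idem (uf_filt hF) hfF'
          calc (f * f') * e = f * (f' * (e * e)) := by rw [he]; simp only [mul_assoc]
          _ = f * ((f' * e) * e) := by simp only [mul_assoc]
          _ = f * ((e * f') * e) := by rw [idem_comm hfi he]
          _ = (f * e) * (f' * e) := by simp only [mul_assoc]
        rw [key]
        exact nle_trans (nle_mul_right hfx (f' * e)) (nle_mul_left x hfx')
      · rintro x ⟨hx, f, hfF, hfx⟩ x' hx' hle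
        exact ⟨hx', f, hfF, nle_trans hfx hle⟩
    have hG0 : (0 : S) ∉ G := by
      rintro ⟨_, f, hfF, hle⟩
      obtain ⟨E, _, hE⟩ := hle
      rw [mulz] at hE
      exact hex f hfF hE
    have hFG : F ⊆ G := by
      intro f hfF
      have hfi := filt_idem (uf_filt hF) hfF
      refine ⟨hfi, f, hfF, (nle_idem_iff (idem_mul_idem hfi he) hfi).mpr ?_⟩
      calc (f * e) * f = f * (e * f) := by rw [mul_assoc]
      _ = f * (f * e) := by rw [idem_comm he hfi]
      _ = (f * f) * e := by rw [mul_assoc]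
      _ = f * e := by rw [hfi]
    have := uf_max hF hGfilt hG0 hFG
    apply h
    rw [this]
    exact ⟨he, 1, filt_one (uf_filt hF), by rw [one_mul]; exact nle_refl e⟩

lemma not_mem_of_compl_mem {F : Set S} (hF : IsIdemUltrafilter F) {e : S}
    (he : e * e = e) (h : bcompl e ∈ F) : e ∉ F := fun heF =>
  uf_zero hF (mul_compl' he ▸ filt_mul (uf_filt hF) heF h)

lemma uf_prime {F : Set S} (hF : IsIdemUltrafilter F) {e f : S}
    (he : e * e = e) (hf : f * f = f) (h : bsup e f ∈ F) : e ∈ F ∨ f ∈ F := by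
  by_contra hc
  push_neg at hc
  have hce := compl_mem_of_not_mem hF he hc.1
  have hcf := compl_mem_of_not_mem hF hf hc.2
  have hx : (bcompl e * bcompl f) * bsup e f ∈ F :=
    filt_mul (uf_filt hF) (filt_mul (uf_filt hF) hce hcf) h
  have hzero : (bcompl e * bcompl f) * bsup e f = 0 := by
    rw [mul_bsup _ (compat_idem he hf)]
    have h1 : (bcompl e * bcompl f) * e = 0 := by
      rw [mul_assoc, idem_comm (compl_idem' hf) he, ← mul_assoc, compl_mul' he, zmul]
    have h2 : (bcompl e * bcompl f) * f = 0 := by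
      rw [mul_assoc, compl_mul' hf, mulz]
    rw [h1, h2, bsup_zero]
  rw [hzero] at hx
  exact uf_zero hF hx

lemma uf_separate {e f : S} (he : e * e = e) (hf : f * f = f)
    (h : ∀ F : Set S, IsIdemUltrafilter F → (e ∈ F ↔ f ∈ F)) : e = f := by
  have key : ∀ e' f' : S, e' * e' = e' → f' * f' = f' →
      (∀ F : Set S, IsIdemUltrafilter F → e' ∈ F → f' ∈ F) → e' * f' = e' := by
    intro e' f' he' hf' himp
    by_contra hne
    have hnz : e' * bcompl f' ≠ 0 := fun hz => hne (nle_of_mul_compl_zero hf' hz)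
    have hidem : (e' * bcompl f') * (e' * bcompl f') = e' * bcompl f' :=
      idem_mul_idem he' (compl_idem' hf')
    obtain ⟨F, hFu, hmF⟩ := exists_ultrafilter hidem hnz
    have heF : e' ∈ F := by
      refine filt_up' (uf_filt hFu) hmF he' ?_
      calc (e' * bcompl f') * e' = e' * (bcompl f' * e') := by rw [mul_assoc]
      _ = e' * (e' * bcompl f') := by rw [idem_comm (compl_idem' hf') he']
      _ = (e' * e') * bcompl f' := by rw [mul_assoc]
      _ = e' * bcompl f' := by rw [he']
    have hcfF : bcompl f' ∈ F := by
      refine filt_up' (uf_filt hFu) hmF (compl_idem' hf') ?_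
      rw [mul_assoc, compl_idem' hf']
    exact not_mem_of_compl_mem hFu hf' hcfF (himp F hFu heF)
  have h1 : e * f = e := key e f he hf (fun F hF => (h F hF).mp)
  have h2 : f * e = f := key f e hf he (fun F hF => (h F hF).mpr)
  rw [← h1, idem_comm he hf, h2]

/-! ### conjugation -/

lemma conj_cancel_l {g : S} (hg : IsUnit g) (x : S) : g⁻¹ * (g * x * g⁻¹) * g = x := by
  calc g⁻¹ * (g * x * g⁻¹) * g = (g⁻¹ * g) * (x * (g⁻¹ * g)) := by simp only [mul_assoc]
  _ = x := by rw [unit_l hg, one_mul, mul_one]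

lemma conj_cancel_r {g : S} (hg : IsUnit g) (x : S) : g * (g⁻¹ * x * g) * g⁻¹ = x := by
  calc g * (g⁻¹ * x * g) * g⁻¹ = (g * g⁻¹) * (x * (g * g⁻¹)) := by simp only [mul_assoc]
  _ = x := by rw [unit_r hg, one_mul, mul_one]

lemma conj_mul' {g : S} (hg : IsUnit g) (x y : S) :
    (g * x * g⁻¹) * (g * y * g⁻¹) = g * (x * y) * g⁻¹ := by
  calc (g * x * g⁻¹) * (g * y * g⁻¹) = g * (x * (g⁻¹ * (g * (y * g⁻¹)))) := by
        simp only [mul_assoc]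
  _ = g * (x * (y * g⁻¹)) := by rw [mulpair (unit_l hg), one_mul]
  _ = g * (x * y) * g⁻¹ := by simp only [mul_assoc]

lemma mem_conjSet {g : S} (hg : IsUnit g) {F : Set S} {y : S} :
    y ∈ conjSet g F ↔ g⁻¹ * y * g ∈ F := by
  constructor
  · rintro ⟨e, heF, rfl⟩
    rwa [conj_cancel_l hg]
  · intro h
    exact ⟨g⁻¹ * y * g, h, conj_cancel_r hg y⟩

lemma conjSet_mono (g : S) {F G : Set S} (h : F ⊆ G) : conjSet g F ⊆ conjSet g G :=
  Set.image_mono h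

lemma conjSet_inv_conjSet {g : S} (hg : IsUnit g) (F : Set S) :
    conjSet g⁻¹ (conjSet g F) = F := by
  ext y
  rw [mem_conjSet (unit_inv_isUnit hg), inv_invS, mem_conjSet hg, conj_cancel_l hg]

lemma conjSet_conjSet_inv {g : S} (hg : IsUnit g) (F : Set S) :
    conjSet g (conjSet g⁻¹ F) = F := by
  have := conjSet_inv_conjSet (unit_inv_isUnit hg) F
  rwa [inv_invS] at this

lemma conj_filt {g : S} (hg : IsUnit g) {F : Set S} (hF : IsIdemFilter F) :
    IsIdemFilter (conjSet g F) := by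
  refine ⟨hF.1.image _, ?_, ?_, ?_⟩
  · rintro y ⟨e, heF, rfl⟩
    exact conj_idem (filt_idem hF heF) g
  · rintro y ⟨e, heF, rfl⟩ y' ⟨e', heF', rfl⟩
    show (g * e * g⁻¹) * (g * e' * g⁻¹) ∈ conjSet g F
    rw [conj_mul' hg]
    exact ⟨e * e', filt_mul hF heF heF', rfl⟩
  · rintro y ⟨e, heF, rfl⟩ y' hy' hle
    have hle' : nle (g * e * g⁻¹) y' := hle
    have hY : (g⁻¹ * y' * g) * (g⁻¹ * y' * g) = g⁻¹ * y' * g := by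
      have := conj_idem hy' g⁻¹
      rwa [inv_invS] at this
    have h1 : nle e (g⁻¹ * y' * g) := by
      have h2 := nle_mul_left g⁻¹ (nle_mul_right hle' g)
      have e1 : g⁻¹ * ((g * e * g⁻¹) * g) = e := by
        rw [← mul_assoc]; exact conj_cancel_l hg e
      have e2 : g⁻¹ * (y' * g) = g⁻¹ * y' * g := (mul_assoc _ _ _).symm
      rwa [e1, e2] at h2
    exact ⟨g⁻¹ * y' * g, filt_up hF heF hY h1, conj_cancel_r hg y'⟩

lemma conj_zero_not_mem {g : S} (hg : IsUnit g) {F : Set S} (hF0 : (0 : S) ∉ F) :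
    (0 : S) ∉ conjSet g F := by
  intro h
  rw [mem_conjSet hg, mulz, zmul] at h
  exact hF0 h

lemma conj_uf {g : S} (hg : IsUnit g) {F : Set S} (hF : IsIdemUltrafilter F) :
    IsIdemUltrafilter (conjSet g F) := by
  refine ⟨conj_filt hg (uf_filt hF), conj_zero_not_mem hg (uf_zero hF), ?_⟩
  intro G hG hG0 hsub
  have h1 : F ⊆ conjSet g⁻¹ G := by
    have := conjSet_mono g⁻¹ hsub
    rwa [conjSet_inv_conjSet hg] at this
  have h2 : F = conjSet g⁻¹ G :=
    uf_max hF (conj_filt (unit_inv_isUnit hg) hG) (conj_zero_not_mem (unit_inv_isUnit hg) hG0) h1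
  rw [h2, conjSet_conjSet_inv hg]

/-! ### meets, phi and sigma -/

lemma binf_le_left (a b : S) : nle (binf a b) a := BooleanInverseMeetMonoid.inf_le_left a b
lemma binf_le_right (a b : S) : nle (binf a b) b := BooleanInverseMeetMonoid.inf_le_right a b
lemma le_binf {a b c : S} (h1 : nle c a) (h2 : nle c b) : nle c (binf a b) :=
  BooleanInverseMeetMonoid.le_inf a b c h1 h2

lemma phi_nle (s : S) : nle (phi s) s := binf_le_left s 1

lemma phi_nle_one (s : S) : nle (phi s) 1 := binf_le_right s 1

lemma phi_idem (s : S) : phi s * phi s = phi s := by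
  obtain ⟨e, he, h⟩ := phi_nle_one s
  rw [mul_one] at h
  rw [h]; exact he

lemma idem_nle_phi {e s : S} (he : e * e = e) (h : nle e s) : nle e (phi s) :=
  le_binf h (idem_nle_one he)

lemma phi_one : phi (1 : S) = 1 :=
  nle_antisymm (phi_nle_one 1) (idem_nle_phi one_idem (nle_refl 1))

lemma idem_fix_l {e t : S} (he : e * e = e) (h : nle e t) : t * e = e := by
  have h1 := nle_dom h
  rw [idem_inv he, he] at h1
  exact h1.symm

lemma idem_fix_r {e t : S} (he : e * e = e) (h : nle e t) : e * t = e := by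
  have h1 := nle_ran h
  rw [idem_inv he, he] at h1
  exact h1.symm

lemma fix_of_ran {t y : S} (h : nle (y * y⁻¹) t) : t * y = y := by
  have h1 : t * (y * y⁻¹) = y * y⁻¹ := idem_fix_l (ran_idem y) h
  calc t * y = t * ((y * y⁻¹) * y) := by rw [imul]
  _ = (t * (y * y⁻¹)) * y := by simp only [mul_assoc]
  _ = (y * y⁻¹) * y := by rw [h1]
  _ = y := imul y

lemma fix_of_dom {t y : S} (h : nle (y⁻¹ * y) t) : y * t = y := by
  have h1 : (y⁻¹ * y) * t = y⁻¹ * y := idem_fix_r (dom_idem y) h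
  have h3 : y * (y⁻¹ * y) = y := by rw [← mul_assoc, imul]
  calc y * t = (y * (y⁻¹ * y)) * t := by rw [h3]
  _ = y * ((y⁻¹ * y) * t) := by simp only [mul_assoc]
  _ = y * (y⁻¹ * y) := by rw [h1]
  _ = y := h3

lemma idem_fix_conj {g e : S} (hg : IsUnit g) (he : e * e = e) (h : nle e g) :
    g * e * g⁻¹ = e := by
  have h1 : g * e = e := by
    have : nle (e * e⁻¹) g := by rwa [idem_inv he, he]
    exact fix_of_ran this
  have h2 : e * g⁻¹ = e := by
    have hinv : nle e g⁻¹ := by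
      have := nle_inv h
      rwa [idem_inv he] at this
    have : nle (e⁻¹ * e) g⁻¹ := by rwa [idem_inv he, he]
    exact fix_of_dom this
  rw [h1, h2]

lemma sigma_unit {g : S} (hg : IsUnit g) : sigma g = bcompl (phi g) := by
  unfold sigma
  rw [unit_l hg, mul_one]

lemma sigma_idem {g : S} (hg : IsUnit g) : sigma g * sigma g = sigma g := by
  rw [sigma_unit hg]; exact compl_idem' (phi_idem g)

lemma phi_mul_sigma {g : S} (hg : IsUnit g) : phi g * sigma g = 0 := by
  rw [sigma_unit hg]; exact mul_compl' (phi_idem g)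

lemma sigma_mul_phi {g : S} (hg : IsUnit g) : sigma g * phi g = 0 := by
  rw [sigma_unit hg]; exact compl_mul' (phi_idem g)

lemma bsup_phi_sigma {g : S} (hg : IsUnit g) : bsup (phi g) (sigma g) = 1 := by
  rw [sigma_unit hg]; exact bsup_compl' (phi_idem g)

lemma sigma_one : sigma (1 : S) = 0 := by
  unfold sigma
  rw [phi_one, compl_one, zmul]

lemma unit_eq_one_of_sigma_zero {g : S} (hg : IsUnit g) (h : sigma g = 0) : g = 1 := by
  have hphi : phi g = 1 := by
    rw [sigma_unit hg] at h
    exact eq_one_of_compl_zero (phi_idem g) h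
  have h1 : nle (1 : S) g := hphi ▸ phi_nle g
  obtain ⟨E, hE, hEg⟩ := h1
  have hEinv : E = g⁻¹ := by
    have : 1 * g⁻¹ = E * g * g⁻¹ := by rw [← hEg]
    rwa [one_mul, mul_assoc, unit_r hg, mul_one, eq_comm] at this
  have : g⁻¹ = 1 := idem_unit_eq_one (by rw [← hEinv]; exact hE) (unit_inv_isUnit hg)
  calc g = g⁻¹⁻¹ := (inv_invS g).symm
  _ = 1 := by rw [this, inv_one']

/-! ### conjugation of sup, compl, phi, sigma -/

lemma compat_of_orth {a b : S} (h : Orth a b) : Compat a b := by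
  constructor
  · rw [h.1]; exact zero_idem
  · rw [h.2]; exact zero_idem

lemma unit_conj {a g : S} (ha : IsUnit a) (hg : IsUnit g) : IsUnit (a * g * a⁻¹) := by
  refine isUnit_iff_exists.mpr ⟨a * g⁻¹ * a⁻¹, ?_, ?_⟩
  · rw [conj_mul' ha, unit_r hg, mul_one, unit_r ha]
  · rw [conj_mul' ha, unit_l hg, mul_one, unit_r ha]

lemma conj_bsup {a x y : S} (ha : IsUnit a) (h : Compat x y) :
    a * bsup x y * a⁻¹ = bsup (a * x * a⁻¹) (a * y * a⁻¹) := by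
  have hL : Compat (a * x) (a * y) := by
    constructor
    · have e1 : (a * x) * (a * y)⁻¹ = a * (x * y⁻¹) * a⁻¹ := by
        rw [mul_inv_rev']; simp only [mul_assoc]
      rw [e1]; exact conj_idem h.1 a
    · have e2 : (a * x)⁻¹ * (a * y) = x⁻¹ * y := by
        rw [mul_inv_rev']
        calc x⁻¹ * a⁻¹ * (a * y) = x⁻¹ * (a⁻¹ * (a * y)) := by simp only [mul_assoc]
        _ = x⁻¹ * y := by rw [mulpair (unit_l ha), one_mul]
      rw [e2]; exact h.2
  have hR : Compat (a * x * a⁻¹) (a * y * a⁻¹) := by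
    constructor
    · have e1 : (a * x * a⁻¹) * (a * y * a⁻¹)⁻¹ = a * (x * y⁻¹) * a⁻¹ := by
        rw [mul_inv_rev', mul_inv_rev', inv_invS]
        calc a * x * a⁻¹ * (a * (y⁻¹ * a⁻¹)) = a * (x * (a⁻¹ * (a * (y⁻¹ * a⁻¹)))) := by
              simp only [mul_assoc]
        _ = a * (x * (y⁻¹ * a⁻¹)) := by rw [mulpair (unit_l ha), one_mul]
        _ = a * (x * y⁻¹) * a⁻¹ := by simp only [mul_assoc]
      rw [e1]; exact conj_idem h.1 a
    · have e2 : (a * x * a⁻¹)⁻¹ * (a * y * a⁻¹) = a * (x⁻¹ * y) * a⁻¹ := by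
        rw [mul_inv_rev', mul_inv_rev', inv_invS]
        calc a * (x⁻¹ * a⁻¹) * (a * y * a⁻¹) = a * (x⁻¹ * (a⁻¹ * (a * (y * a⁻¹)))) := by
              simp only [mul_assoc]
        _ = a * (x⁻¹ * (y * a⁻¹)) := by rw [mulpair (unit_l ha), one_mul]
        _ = a * (x⁻¹ * y) * a⁻¹ := by simp only [mul_assoc]
      rw [e2]; exact conj_idem h.2 a
  rw [mul_bsup a h, bsup_mul a⁻¹ hL]

lemma conj_compl {a e : S} (ha : IsUnit a) (he : e * e = e) :
    a * bcompl e * a⁻¹ = bcompl (a * e * a⁻¹) := by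
  refine bcompl_unique (conj_idem he a) (conj_idem (compl_idem' he) a) ?_ ?_
  · rw [conj_mul' ha, compl_mul' he, mulz, zmul]
  · rw [← conj_bsup ha (compat_idem he (compl_idem' he)), bsup_compl' he, mul_one, unit_r ha]

lemma conj_nle {a x y : S} (h : nle x y) : nle (a * x * a⁻¹) (a * y * a⁻¹) :=
  nle_mul_right (nle_mul_left a h) a⁻¹

lemma phi_conj {a g : S} (ha : IsUnit a) : phi (a * g * a⁻¹) = a * phi g * a⁻¹ := by
  refine nle_antisymm ?_ ?_
  · have hx1 : nle (phi (a * g * a⁻¹)) (a * g * a⁻¹) := phi_nle _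
    have hx2 : nle (phi (a * g * a⁻¹)) 1 := phi_nle_one _
    have hy1 : nle (a⁻¹ * phi (a * g * a⁻¹) * a) g := by
      have h2 := nle_mul_right (nle_mul_left a⁻¹ hx1) a
      rwa [conj_cancel_l ha g] at h2
    have hy2 : nle (a⁻¹ * phi (a * g * a⁻¹) * a) 1 := by
      have h3 := nle_mul_right (nle_mul_left a⁻¹ hx2) a
      rwa [mul_one, unit_l ha] at h3
    have hyphi : nle (a⁻¹ * phi (a * g * a⁻¹) * a) (phi g) := le_binf hy1 hy2
    have h4 := conj_nle (a := a) hyphi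
    rwa [conj_cancel_r ha _] at h4
  · have k1 : nle (a * phi g * a⁻¹) (a * g * a⁻¹) := conj_nle (phi_nle g)
    have k2 : nle (a * phi g * a⁻¹) 1 := by
      have := conj_nle (a := a) (phi_nle_one g)
      rwa [mul_one, unit_r ha] at this
    exact le_binf k1 k2

lemma sigma_conj {a g : S} (ha : IsUnit a) (hg : IsUnit g) :
    sigma (a * g * a⁻¹) = a * sigma g * a⁻¹ := by
  rw [sigma_unit (unit_conj ha hg), phi_conj ha, ← conj_compl ha (phi_idem g),
    ← sigma_unit hg]

lemma conj_sigma_self {g : S} (hg : IsUnit g) : g * sigma g * g⁻¹ = sigma g := by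
  have hgg : g * g * g⁻¹ = g := by rw [mul_assoc, unit_r hg, mul_one]
  have := sigma_conj hg hg
  rw [hgg] at this
  exact this.symm

lemma conj_phi_self {g : S} (hg : IsUnit g) : g * phi g * g⁻¹ = phi g := by
  have hgg : g * g * g⁻¹ = g := by rw [mul_assoc, unit_r hg, mul_one]
  have := phi_conj (g := g) hg
  rw [hgg] at this
  exact this.symm

lemma compl_sigma {g : S} (hg : IsUnit g) : bcompl (sigma g) = phi g := by
  rw [sigma_unit hg, compl_compl' (phi_idem g)]

lemma phi_inv {g : S} (hg : IsUnit g) : phi g⁻¹ = phi g := by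
  refine nle_antisymm ?_ ?_
  · have h1 : nle (phi g⁻¹) g := by
      have := nle_inv (phi_nle g⁻¹)
      rwa [idem_inv (phi_idem g⁻¹), inv_invS] at this
    exact le_binf h1 (phi_nle_one g⁻¹)
  · have h1 : nle (phi g) g⁻¹ := by
      have := nle_inv (phi_nle g)
      rwa [idem_inv (phi_idem g)] at this
    exact le_binf h1 (phi_nle_one g)

lemma sigma_inv {g : S} (hg : IsUnit g) : sigma g⁻¹ = sigma g := by
  rw [sigma_unit (unit_inv_isUnit hg), sigma_unit hg, phi_inv hg]
lemma TMP : True := trivial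

lemma nle_sigma_phi_of_disj {g h : S} (hg : IsUnit g) (hh : IsUnit h)
    (hd : sigma h * sigma g = 0) : sigma h * phi g = sigma h := by
  have := nle_compl_of_mul_zero (sigma_idem hg) hd
  rwa [compl_sigma hg] at this

lemma nle_of_idem_mul {e f : S} (he : e * e = e) (hf : f * f = f) (h : e * f = e) :
    nle e f := (nle_idem_iff he hf).mpr h

/-- Units with disjoint supports commute. -/
lemma disjoint_commute {g h : S} (hg : IsUnit g) (hh : IsUnit h)
    (hd : sigma g * sigma h = 0) : g * h = h * g := by
  set f := sigma h with hf
  have hfidem : f * f = f := sigma_idem hh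
  have hd' : f * sigma g = 0 := by
    rw [hf, idem_comm hfidem (sigma_idem hg)]; exact hd
  have hfphi : f * phi g = f := nle_sigma_phi_of_disj hg hh hd'
  have hfg : nle f g := nle_trans (nle_of_idem_mul hfidem (phi_idem g) hfphi) (phi_nle g)
  have hgf : g * f = f := idem_fix_l hfidem hfg
  have hfg' : f * g = f := idem_fix_r hfidem hfg
  have hconjf : g * f * g⁻¹ = f := idem_fix_conj hg hfidem hfg
  -- decompose h
  have hdecomp : h = bsup (h * f) (h * bcompl f) := mul_partition hfidem h
  have horth : Orth (h * f) (h * bcompl f) := by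
    constructor
    · rw [mul_inv_rev', idem_inv (compl_idem' hfidem)]
      calc (h * f) * (bcompl f * h⁻¹) = h * ((f * bcompl f) * h⁻¹) := by simp only [mul_assoc]
      _ = 0 := by rw [mul_compl' hfidem, zmul, mulz]
    · rw [mul_inv_rev', idem_inv hfidem]
      calc (f * h⁻¹) * (h * bcompl f) = f * ((h⁻¹ * h) * bcompl f) := by simp only [mul_assoc]
      _ = f * bcompl f := by rw [unit_l hh, one_mul]
      _ = 0 := mul_compl' hfidem
  have hcompat := compat_of_orth horth
  -- g fixes h*f
  have hranhf : (h * f) * (h * f)⁻¹ = f := by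
    rw [mul_inv_rev', idem_inv hfidem]
    calc (h * f) * (f * h⁻¹) = h * ((f * f) * h⁻¹) := by simp only [mul_assoc]
    _ = h * f * h⁻¹ := by rw [hfidem, mul_assoc]
    _ = f := by rw [hf]; exact conj_sigma_self hh
  have hdomhf : (h * f)⁻¹ * (h * f) = f := by
    rw [mul_inv_rev', idem_inv hfidem]
    calc (f * h⁻¹) * (h * f) = f * ((h⁻¹ * h) * f) := by simp only [mul_assoc]
    _ = f * f := by rw [unit_l hh, one_mul]
    _ = f := hfidem
  have hg1 : g * (h * f) = h * f := fix_of_ran (by rw [hranhf]; exact hfg)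
  have hg2 : (h * f) * g⁻¹ = h * f := by
    refine fix_of_dom ?_
    rw [hdomhf]
    have := nle_inv hfg
    rwa [idem_inv hfidem] at this
  -- g fixes h * bcompl f = bcompl f
  have hhcf : h * bcompl f = bcompl f := by
    rw [hf, compl_sigma hh]
    exact idem_fix_l (phi_idem h) (phi_nle h)
  have hgcf : g * bcompl f * g⁻¹ = bcompl f := by
    rw [conj_compl hg hfidem, hconjf]
  -- conjugate the decomposition
  have hconj : g * h * g⁻¹ = h := by
    calc g * h * g⁻¹ = g * bsup (h * f) (h * bcompl f) * g⁻¹ := by rw [← hdecomp]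
    _ = bsup (g * (h * f) * g⁻¹) (g * (h * bcompl f) * g⁻¹) := conj_bsup hg hcompat
    _ = bsup (h * f) (h * bcompl f) := by
        rw [hg1, hg2, hhcf, hgcf, ← hhcf]
    _ = h := hdecomp.symm
  calc g * h = (g * h * g⁻¹) * g := by rw [mul_assoc, mul_assoc, unit_l hg, mul_one]
  _ = h * g := by rw [hconj]

/-! ### the moving-ultrafilter lemma -/

lemma comm_of_conj_eq {g x : S} (hg : IsUnit g) (h : g * x * g⁻¹ = x) : g * x = x * g := by
  calc g * x = (g * x * g⁻¹) * g := by rw [mul_assoc (g*x), unit_l hg, mul_one]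
  _ = x * g := by rw [h]

lemma conj_eq_of_comm {g x : S} (hg : IsUnit g) (h : g * x = x * g) : g * x * g⁻¹ = x := by
  rw [h, mul_assoc, unit_r hg, mul_one]

lemma exists_moved_uf {g e : S} (hfund : Fundamental S) (hg : IsUnit g)
    (he : e * e = e) (h0 : e ≠ 0) (hle : e * sigma g = e) :
    ∃ F : Set S, IsIdemUltrafilter F ∧ e ∈ F ∧ conjSet g F ≠ F := by
  by_contra hc
  push_neg at hc
  have hfix : ∀ F : Set S, IsIdemUltrafilter F → e ∈ F → conjSet g F = F := hc
  -- (i) g fixes every idempotent below e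
  have hfixidem : ∀ f : S, f * f = f → f * e = f → g * f * g⁻¹ = f := by
    intro f hf hfe
    refine uf_separate (conj_idem hf g) hf ?_
    intro F hF
    constructor
    · intro hmem
      have hfG : f ∈ conjSet g⁻¹ F := by
        rw [mem_conjSet (unit_inv_isUnit hg), inv_invS]
        exact hmem
      have hGu : IsIdemUltrafilter (conjSet g⁻¹ F) := conj_uf (unit_inv_isUnit hg) hF
      have heG : e ∈ conjSet g⁻¹ F := filt_up' (uf_filt hGu) hfG he hfe
      have hkey := hfix _ hGu heG
      rw [conjSet_conjSet_inv hg] at hkey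
      rw [hkey]
      exact hfG
    · intro hmem
      have heF : e ∈ F := filt_up' (uf_filt hF) hmem he hfe
      have hkey := hfix F hF heF
      rw [← hkey]
      exact ⟨f, hmem, rfl⟩
  -- (ii)
  have hconj_e : g * e * g⁻¹ = e := hfixidem e he he
  have hge_eg : g * e = e * g := comm_of_conj_eq hg hconj_e
  have hce := compl_idem' he
  have hconj_ce : g * bcompl e * g⁻¹ = bcompl e := by
    rw [conj_compl hg he, hconj_e]
  have hgce : g * bcompl e = bcompl e * g := comm_of_conj_eq hg hconj_ce
  have hginv_ce : g⁻¹ * bcompl e = bcompl e * g⁻¹ := by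
    calc g⁻¹ * bcompl e = g⁻¹ * (bcompl e * g) * g⁻¹ := by
          rw [mul_assoc, mul_assoc, unit_r hg, mul_one]
    _ = g⁻¹ * (g * bcompl e) * g⁻¹ := by rw [hgce]
    _ = bcompl e * g⁻¹ := by rw [← mul_assoc, unit_l hg, one_mul]
  -- (iii) the unit w
  set w : S := bsup (g * e) (bcompl e) with hw
  set v : S := bsup (e * g⁻¹) (bcompl e) with hv
  have hCw : Compat (g * e) (bcompl e) := by
    refine compat_of_orth ⟨?_, ?_⟩
    · rw [idem_inv hce]
      calc (g * e) * bcompl e = g * (e * bcompl e) := by rw [mul_assoc]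
      _ = 0 := by rw [mul_compl' he, mulz]
    · rw [mul_inv_rev', idem_inv he]
      calc (e * g⁻¹) * bcompl e = e * (bcompl e * g⁻¹) := by rw [mul_assoc, hginv_ce]
      _ = 0 := by rw [← mul_assoc, mul_compl' he, zmul]
  have hCv : Compat (e * g⁻¹) (bcompl e) := by
    refine compat_of_orth ⟨?_, ?_⟩
    · rw [idem_inv hce]
      calc (e * g⁻¹) * bcompl e = e * (bcompl e * g⁻¹) := by rw [mul_assoc, hginv_ce]
      _ = 0 := by rw [← mul_assoc, mul_compl' he, zmul]
    · rw [mul_inv_rev', idem_inv he, inv_invS]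
      calc (g * e) * bcompl e = g * (e * bcompl e) := by rw [mul_assoc]
      _ = 0 := by rw [mul_compl' he, mulz]
  have hwv : w * v = 1 := by
    rw [hw, hv, bsup_mul _ hCw]
    have h1 : (g * e) * bsup (e * g⁻¹) (bcompl e) = e := by
      rw [mul_bsup _ hCv]
      have e1 : (g * e) * (e * g⁻¹) = e := by
        calc (g * e) * (e * g⁻¹) = g * ((e * e) * g⁻¹) := by simp only [mul_assoc]
        _ = g * e * g⁻¹ := by rw [he, mul_assoc]
        _ = e := hconj_e
      have e2 : (g * e) * bcompl e = 0 := by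
        rw [mul_assoc, mul_compl' he, mulz]
      rw [e1, e2, bsup_zero]
    have h2 : bcompl e * bsup (e * g⁻¹) (bcompl e) = bcompl e := by
      rw [mul_bsup _ hCv]
      have e3 : bcompl e * (e * g⁻¹) = 0 := by
        rw [← mul_assoc, compl_mul' he, zmul]
      rw [e3, zero_bsup, hce]
    rw [h1, h2]
    exact bsup_compl' he
  have hvw : v * w = 1 := by
    rw [hw, hv, bsup_mul _ hCv]
    have h1 : (e * g⁻¹) * bsup (g * e) (bcompl e) = e := by
      rw [mul_bsup _ hCw]
      have e1 : (e * g⁻¹) * (g * e) = e := by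
        calc (e * g⁻¹) * (g * e) = e * ((g⁻¹ * g) * e) := by simp only [mul_assoc]
        _ = e * e := by rw [unit_l hg, one_mul]
        _ = e := he
      have e2 : (e * g⁻¹) * bcompl e = 0 := by
        rw [mul_assoc, hginv_ce, ← mul_assoc, mul_compl' he, zmul]
      rw [e1, e2, bsup_zero]
    have h2 : bcompl e * bsup (g * e) (bcompl e) = bcompl e := by
      rw [mul_bsup _ hCw]
      have e3 : bcompl e * (g * e) = 0 := by
        rw [hge_eg, ← mul_assoc, compl_mul' he, zmul]
      rw [e3, zero_bsup, hce]
    rw [h1, h2]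
    exact bsup_compl' he
  have hwunit : IsUnit w := isUnit_iff_exists.mpr ⟨v, hwv, hvw⟩
  -- (iv) w commutes with all idempotents
  have hcomm : ∀ x : S, x * x = x → w * x = x * w := by
    intro x hx
    have hCxv : Compat (x * (e * g⁻¹)) (x * bcompl e) := by
      refine compat_of_orth ⟨?_, ?_⟩
      · rw [mul_inv_rev', idem_inv hce, idem_inv hx]
        calc (x * (e * g⁻¹)) * (bcompl e * x) = x * (e * (g⁻¹ * bcompl e) * x) := by
              simp only [mul_assoc]
        _ = x * (e * (bcompl e * g⁻¹) * x) := by rw [hginv_ce]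
        _ = x * ((e * bcompl e) * (g⁻¹ * x)) := by simp only [mul_assoc]
        _ = 0 := by rw [mul_compl' he, zmul, mulz]
      · rw [mul_inv_rev', mul_inv_rev', idem_inv hx, idem_inv he, inv_invS]
        calc (g * e * x) * (x * bcompl e) = g * (e * ((x * x) * bcompl e)) := by
              simp only [mul_assoc]
        _ = g * (e * (x * bcompl e)) := by rw [hx]
        _ = g * ((e * x) * bcompl e) := by simp only [mul_assoc]
        _ = g * ((x * e) * bcompl e) := by rw [idem_comm he hx]
        _ = g * (x * (e * bcompl e)) := by simp only [mul_assoc]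
        _ = 0 := by rw [mul_compl' he, mulz, mulz]
    have hA : w * (x * (e * g⁻¹)) = x * e := by
      rw [hw, bsup_mul _ hCw]
      have e1 : (g * e) * (x * (e * g⁻¹)) = x * e := by
        have inner : e * (x * e) = x * e := by
          rw [idem_comm hx he, ← mul_assoc, he]
        calc (g * e) * (x * (e * g⁻¹)) = g * (e * (x * e)) * g⁻¹ := by
              simp only [mul_assoc]
        _ = g * (x * e) * g⁻¹ := by rw [inner]
        _ = x * e := hfixidem (x * e) (by
              calc (x * e) * (x * e) = x * (e * x) * e := by simp only [mul_assoc]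
              _ = x * (x * e) * e := by rw [idem_comm he hx]
              _ = (x * x) * (e * e) := by simp only [mul_assoc]
              _ = x * e := by rw [hx, he]) (by rw [mul_assoc, he])
      have e2 : bcompl e * (x * (e * g⁻¹)) = 0 := by
        calc bcompl e * (x * (e * g⁻¹)) = (bcompl e * x) * (e * g⁻¹) := by
              simp only [mul_assoc]
        _ = (x * bcompl e) * (e * g⁻¹) := by rw [idem_comm hce hx]
        _ = x * ((bcompl e * e) * g⁻¹) := by simp only [mul_assoc]
        _ = 0 := by rw [compl_mul' he, zmul, mulz]
      rw [e1, e2, bsup_zero]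
    have hB : w * (x * bcompl e) = x * bcompl e := by
      rw [hw, bsup_mul _ hCw]
      have e1 : (g * e) * (x * bcompl e) = 0 := by
        calc (g * e) * (x * bcompl e) = g * ((e * x) * bcompl e) := by
              simp only [mul_assoc]
        _ = g * ((x * e) * bcompl e) := by rw [idem_comm he hx]
        _ = g * (x * (e * bcompl e)) := by simp only [mul_assoc]
        _ = 0 := by rw [mul_compl' he, mulz, mulz]
      have e2 : bcompl e * (x * bcompl e) = x * bcompl e := by
        calc bcompl e * (x * bcompl e) = (bcompl e * x) * bcompl e := by
              simp only [mul_assoc]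
        _ = (x * bcompl e) * bcompl e := by rw [idem_comm hce hx]
        _ = x * (bcompl e * bcompl e) := by simp only [mul_assoc]
        _ = x * bcompl e := by rw [hce]
      rw [e1, e2, zero_bsup]
    have hwxv : w * (x * v) = x := by
      rw [hv, mul_bsup x hCv, mul_bsup w hCxv, hA, hB]
      exact (mul_partition he x).symm
    calc w * x = w * (x * (v * w)) := by rw [hvw, mul_one]
    _ = (w * (x * v)) * w := by simp only [mul_assoc]
    _ = x * w := by rw [hwxv]
  -- (v) fundamentality
  have hwone : w = 1 := idem_unit_eq_one (hfund w hcomm) hwunit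
  -- (vi)
  have hge : g * e = e := by
    have h1 : w * e = g * e := by
      rw [hw, bsup_mul e hCw, mul_assoc, he, compl_mul' he, bsup_zero]
    rw [hwone, one_mul] at h1
    exact h1.symm
  have heg : e * g = e := by rw [← hge_eg, hge]
  have henle : nle e g := ⟨e, he, heg.symm⟩
  have hephi : e * phi g = e := (nle_idem_iff he (phi_idem g)).mp (idem_nle_phi he henle)
  have hzero : e = 0 := by
    calc e = e * sigma g := hle.symm
    _ = (e * phi g) * sigma g := by rw [hephi]
    _ = e * (phi g * sigma g) := by rw [mul_assoc]
    _ = 0 := by rw [phi_mul_sigma hg, mulz]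
  exact h0 hzero

/-! ### more orthogonality and join tooling -/

lemma orth_symm {a b : S} (h : Orth a b) : Orth b a := by
  constructor
  · have : b * a⁻¹ = (a * b⁻¹)⁻¹ := by rw [mul_inv_rev', inv_invS]
    rw [this, h.1, inv_zero']
  · have : b⁻¹ * a = (a⁻¹ * b)⁻¹ := by rw [mul_inv_rev', inv_invS]
    rw [this, h.2, inv_zero']

lemma compat_inv {a b : S} (h : Compat a b) : Compat a⁻¹ b⁻¹ := by
  constructor
  · rw [inv_invS]; exact h.2
  · rw [inv_invS]; exact h.1

lemma bsup_inv {a b : S} (h : Compat a b) : (bsup a b)⁻¹ = bsup a⁻¹ b⁻¹ := by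
  have step : ∀ x y : S, Compat x y → nle (bsup x⁻¹ y⁻¹) (bsup x y)⁻¹ := by
    intro x y hxy
    exact bsup_le (compat_inv hxy) (nle_inv (le_bsup_left hxy)) (nle_inv (le_bsup_right hxy))
  refine nle_antisymm ?_ (step a b h)
  have h2 := step a⁻¹ b⁻¹ (compat_inv h)
  rw [inv_invS, inv_invS] at h2
  have h3 := nle_inv h2
  rwa [inv_invS] at h3

lemma orth_bsup_left {a b c : S} (hab : Compat a b) (hac : Orth a c) (hbc : Orth b c) :
    Orth (bsup a b) c := by
  constructor
  · rw [bsup_mul _ hab, hac.1, hbc.1, bsup_zero]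
  · rw [bsup_inv hab, bsup_mul _ (compat_inv hab), hac.2, hbc.2, bsup_zero]

lemma orth_bsup_right {a b c : S} (hbc : Compat b c) (hab : Orth a b) (hac : Orth a c) :
    Orth a (bsup b c) :=
  orth_symm (orth_bsup_left hbc (orth_symm hab) (orth_symm hac))

lemma bsup_exchange {A B C D : S}
    (hAB : Orth A B) (hAC : Orth A C) (hAD : Orth A D)
    (hBC : Orth B C) (hBD : Orth B D) (hCD : Orth C D) :
    bsup (bsup A B) (bsup C D) = bsup (bsup A C) (bsup B D) := by
  have cAB := compat_of_orth hAB
  have cAC := compat_of_orth hAC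
  have cAD := compat_of_orth hAD
  have cBC := compat_of_orth hBC
  have cBD := compat_of_orth hBD
  have cCD := compat_of_orth hCD
  have hL : Compat (bsup A B) (bsup C D) :=
    compat_of_orth (orth_bsup_left cAB (orth_bsup_right cCD hAC hAD)
      (orth_bsup_right cCD hBC hBD))
  have hR : Compat (bsup A C) (bsup B D) :=
    compat_of_orth (orth_bsup_left cAC (orth_bsup_right cBD hAB hAD)
      (orth_bsup_right cBD (orth_symm hBC) hCD))
  refine nle_antisymm ?_ ?_
  · refine bsup_le hL ?_ ?_
    · exact bsup_le cAB (nle_trans (le_bsup_left cAC) (le_bsup_left hR))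
        (nle_trans (le_bsup_left cBD) (le_bsup_right hR))
    · exact bsup_le cCD (nle_trans (le_bsup_right cAC) (le_bsup_left hR))
        (nle_trans (le_bsup_right cBD) (le_bsup_right hR))
  · refine bsup_le hR ?_ ?_
    · exact bsup_le cAC (nle_trans (le_bsup_left cAB) (le_bsup_left hL))
        (nle_trans (le_bsup_left cCD) (le_bsup_right hL))
    · exact bsup_le cBD (nle_trans (le_bsup_right cAB) (le_bsup_left hL))
        (nle_trans (le_bsup_right cCD) (le_bsup_right hL))

/-! ### shrinking to a moved piece -/

lemma exists_orth_piece {g e : S} (hfund : Fundamental S) (hg : IsUnit g)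
    (he : e * e = e) (h0 : e ≠ 0) (hle : e * sigma g = e) :
    ∃ f : S, f * f = f ∧ f ≠ 0 ∧ f * e = f ∧ f * (g * f * g⁻¹) = 0 := by
  obtain ⟨F, hF, heF, hmoved⟩ := exists_moved_uf hfund hg he h0 hle
  have hnotall : ∃ h ∈ F, g * h * g⁻¹ ∉ F := by
    by_contra hall
    push_neg at hall
    apply hmoved
    refine uf_max (conj_uf hg hF) (uf_filt hF) (uf_zero hF) ?_
    rintro y ⟨h, hh, rfl⟩
    exact hall h hh
  obtain ⟨h, hhF, hnot⟩ := hnotall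
  have hh := filt_idem (uf_filt hF) hhF
  have hcidem : (g * h * g⁻¹) * (g * h * g⁻¹) = g * h * g⁻¹ := conj_idem hh g
  have hcmem : bcompl (g * h * g⁻¹) ∈ F := compl_mem_of_not_mem hF hcidem hnot
  set c := bcompl (g * h * g⁻¹) with hc
  have hcid : c * c = c := compl_idem' hcidem
  set f := (e * h) * c with hfdef
  have hfF : f ∈ F := filt_mul (uf_filt hF) (filt_mul (uf_filt hF) heF hhF) hcmem
  have hfidem : f * f = f := idem_mul_idem (idem_mul_idem he hh) hcid
  have hfe : f * e = f := by
    rw [hfdef]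
    calc ((e * h) * c) * e = e * (h * (c * e)) := by simp only [mul_assoc]
    _ = e * (h * (e * c)) := by rw [idem_comm hcid he]
    _ = e * ((h * e) * c) := by simp only [mul_assoc]
    _ = e * ((e * h) * c) := by rw [idem_comm hh he]
    _ = (e * e) * (h * c) := by simp only [mul_assoc]
    _ = (e * h) * c := by rw [he, mul_assoc]
  have hfh : f * h = f := by
    rw [hfdef]
    calc ((e * h) * c) * h = e * (h * (c * h)) := by simp only [mul_assoc]
    _ = e * (h * (h * c)) := by rw [idem_comm hcid hh]
    _ = e * ((h * h) * c) := by simp only [mul_assoc]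
    _ = (e * h) * c := by rw [hh, mul_assoc]
  have hfc : f * c = f := by
    rw [hfdef, mul_assoc, mul_assoc, hcid, ← mul_assoc]
  have hstep1 : (g * f * g⁻¹) * (g * h * g⁻¹) = g * f * g⁻¹ := by
    rw [conj_mul' hg, hfh]
  have hstep2 : f * (g * h * g⁻¹) = 0 := by
    calc f * (g * h * g⁻¹) = (f * c) * (g * h * g⁻¹) := by rw [hfc]
    _ = f * (c * (g * h * g⁻¹)) := by rw [mul_assoc]
    _ = 0 := by rw [hc, compl_mul' hcidem, mulz]
  refine ⟨f, hfidem, uf_mem_ne_zero hF hfF, hfe, ?_⟩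
  calc f * (g * f * g⁻¹) = f * ((g * f * g⁻¹) * (g * h * g⁻¹)) := by rw [hstep1]
  _ = f * ((g * h * g⁻¹) * (g * f * g⁻¹)) := by
      rw [idem_comm (conj_idem hfidem g) hcidem]
  _ = (f * (g * h * g⁻¹)) * (g * f * g⁻¹) := (mul_assoc _ _ _).symm
  _ = 0 := by rw [hstep2, zmul]

lemma sigma_sq_nle {h : S} (hh : IsUnit h) : sigma (h * h) * sigma h = sigma (h * h) := by
  have l1 : nle (phi h * phi h) (h * phi h) := nle_mul_right (phi_nle h) (phi h)
  rw [phi_idem h] at l1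
  have l3 : nle (phi h) (h * h) := nle_trans l1 (nle_mul_left h (phi_nle h))
  have hx : phi h * phi (h * h) = phi h :=
    (nle_idem_iff (phi_idem h) (phi_idem (h * h))).mp (idem_nle_phi (phi_idem h) l3)
  have := bcompl_antitone (phi_idem h) (phi_idem (h * h)) hx
  rwa [← sigma_unit (hh.mul hh), ← sigma_unit hh] at this

/-! ### the involutions s_e = te ∨ compl e -/

lemma inv_invol {t : S} (htt : t * t = 1) : t⁻¹ = t := (unit_inv_eq htt htt).symm

lemma invol_unit {t : S} (htt : t * t = 1) : IsUnit t := isUnit_iff_exists.mpr ⟨t, htt, htt⟩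

lemma idem4 {p q r s : S} (hq : q * q = q) (hr : r * r = r) :
    (p * q) * (r * s) = (p * r) * (q * s) := by
  calc (p * q) * (r * s) = p * ((q * r) * s) := by simp only [mul_assoc]
  _ = p * ((r * q) * s) := by rw [idem_comm hq hr]
  _ = (p * r) * (q * s) := by simp only [mul_assoc]

lemma t_swap {t e : S} (htt : t * t = 1) (hte : t * e * t = e) : t * e = e * t := by
  calc t * e = (t * e) * (t * t) := by rw [htt, mul_one]
  _ = (t * e * t) * t := by simp only [mul_assoc]
  _ = e * t := by rw [hte]

lemma t_inv_compl {t e : S} (htt : t * t = 1) (he : e * e = e) (hte : t * e * t = e) :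
    t * bcompl e * t = bcompl e := by
  have h := conj_compl (invol_unit htt) he
  rw [inv_invol htt] at h
  rw [h, hte]

lemma t_swap_compl {t e : S} (htt : t * t = 1) (he : e * e = e) (hte : t * e * t = e) :
    t * bcompl e = bcompl e * t :=
  t_swap htt (t_inv_compl htt he hte)

def seu (t e : S) : S := bsup (t * e) (bcompl e)

lemma seu_orth {t e : S} (htt : t * t = 1) (he : e * e = e) (hte : t * e * t = e) :
    Orth (t * e) (bcompl e) := by
  constructor
  · rw [idem_inv (compl_idem' he), mul_assoc, mul_compl' he, mulz]
  · rw [mul_inv_rev', idem_inv he, inv_invol htt]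
    calc (e * t) * bcompl e = e * (t * bcompl e) := by rw [mul_assoc]
    _ = e * (bcompl e * t) := by rw [t_swap_compl htt he hte]
    _ = (e * bcompl e) * t := by rw [mul_assoc]
    _ = 0 := by rw [mul_compl' he, zmul]

lemma seu_compat {t e : S} (htt : t * t = 1) (he : e * e = e) (hte : t * e * t = e) :
    Compat (t * e) (bcompl e) := compat_of_orth (seu_orth htt he hte)

lemma te_te {t e f : S} (htt : t * t = 1) (he : e * e = e) (hte : t * e * t = e) :
    (t * e) * (t * f) = e * f := by
  calc (t * e) * (t * f) = t * ((e * t) * f) := by simp only [mul_assoc]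
  _ = t * ((t * e) * f) := by rw [← t_swap htt hte]
  _ = (t * t) * (e * f) := by simp only [mul_assoc]
  _ = e * f := by rw [htt, one_mul]

lemma ce_te {t e f : S} (htt : t * t = 1) (he : e * e = e) (hte : t * e * t = e) :
    bcompl e * (t * f) = t * (bcompl e * f) := by
  calc bcompl e * (t * f) = (bcompl e * t) * f := by rw [mul_assoc]
  _ = (t * bcompl e) * f := by rw [t_swap_compl htt he hte]
  _ = t * (bcompl e * f) := by rw [mul_assoc]

lemma seu_sq {t e : S} (htt : t * t = 1) (he : e * e = e) (hte : t * e * t = e) :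
    seu t e * seu t e = 1 := by
  have hC := seu_compat htt he hte
  unfold seu
  rw [bsup_mul _ hC, mul_bsup _ hC, mul_bsup _ hC]
  have e1 : (t * e) * (t * e) = e := by rw [te_te htt he hte, he]
  have e2 : (t * e) * bcompl e = 0 := by rw [mul_assoc, mul_compl' he, mulz]
  have e3 : bcompl e * (t * e) = 0 := by
    rw [ce_te htt he hte, compl_mul' he, mulz]
  rw [e1, e2, e3, bsup_zero, zero_bsup, compl_idem' he]
  exact bsup_compl' he

lemma seu_unit {t e : S} (htt : t * t = 1) (he : e * e = e) (hte : t * e * t = e) :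
    IsUnit (seu t e) :=
  isUnit_iff_exists.mpr ⟨seu t e, seu_sq htt he hte, seu_sq htt he hte⟩

lemma seu_inv {t e : S} (htt : t * t = 1) (he : e * e = e) (hte : t * e * t = e) :
    (seu t e)⁻¹ = seu t e := inv_invol (seu_sq htt he hte)

lemma seu_mul_e {t e : S} (htt : t * t = 1) (he : e * e = e) (hte : t * e * t = e) :
    seu t e * e = t * e := by
  unfold seu
  rw [bsup_mul _ (seu_compat htt he hte), mul_assoc, he, compl_mul' he, bsup_zero]

lemma phi_seu {t e : S} (htt : t * t = 1) (he : e * e = e) (hte : t * e * t = e)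
    (hsig : e * sigma t = e) : phi (seu t e) = bcompl e := by
  have ht := invol_unit htt
  have hC := seu_compat htt he hte
  have hce := compl_idem' he
  have hcele : nle (bcompl e) (seu t e) := le_bsup_right hC
  have hce_phi : bcompl e * phi (seu t e) = bcompl e :=
    (nle_idem_iff hce (phi_idem _)).mp (idem_nle_phi hce hcele)
  set x := phi (seu t e) * e with hx
  have hxidem : x * x = x := idem_mul_idem (phi_idem _) he
  have hxe : x * e = x := by rw [hx, mul_assoc, he]
  have hxse : nle x (seu t e) := nle_trans (nle_of_right_idem he rfl) (phi_nle _)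
  have hxte : nle x (t * e) := by
    have h1 := nle_mul_right hxse e
    rw [hxe, seu_mul_e htt he hte] at h1
    exact h1
  have hxt : nle x t := nle_trans hxte (nle_of_right_idem he rfl)
  have hxphit : x * phi t = x :=
    (nle_idem_iff hxidem (phi_idem t)).mp (idem_nle_phi hxidem hxt)
  have hxsigt : x * sigma t = x := by
    calc x * sigma t = (x * e) * sigma t := by rw [hxe]
    _ = x * (e * sigma t) := by rw [mul_assoc]
    _ = x := by rw [hsig, hxe]
  have hxzero : x = 0 := by
    calc x = x * phi t := hxphit.symm
    _ = (x * sigma t) * phi t := by rw [hxsigt]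
    _ = x * (sigma t * phi t) := by rw [mul_assoc]
    _ = 0 := by rw [sigma_mul_phi ht, mulz]
  have hphice : phi (seu t e) * bcompl e = phi (seu t e) :=
    nle_compl_of_mul_zero he hxzero
  calc phi (seu t e) = phi (seu t e) * bcompl e := hphice.symm
  _ = bcompl e * phi (seu t e) := idem_comm (phi_idem _) hce
  _ = bcompl e := hce_phi

lemma sigma_seu {t e : S} (htt : t * t = 1) (he : e * e = e) (hte : t * e * t = e)
    (hsig : e * sigma t = e) : sigma (seu t e) = e := by
  rw [sigma_unit (seu_unit htt he hte), phi_seu htt he hte hsig, compl_compl' he]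

lemma seu_ne_one {t e : S} (htt : t * t = 1) (he : e * e = e) (hte : t * e * t = e)
    (hsig : e * sigma t = e) (h0 : e ≠ 0) : seu t e ≠ 1 := by
  intro h
  apply h0
  rw [← sigma_seu htt he hte hsig, h, sigma_one]

lemma conj_seu {t e a : S} (htt : t * t = 1) (he : e * e = e) (hte : t * e * t = e)
    (ha : IsUnit a) (hat : a * t = t * a) :
    a * seu t e * a⁻¹ = seu t (a * e * a⁻¹) := by
  unfold seu
  rw [conj_bsup ha (seu_compat htt he hte), conj_compl ha he]
  have h1 : a * (t * e) * a⁻¹ = t * (a * e * a⁻¹) := by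
    calc a * (t * e) * a⁻¹ = (a * t) * (e * a⁻¹) := by simp only [mul_assoc]
    _ = (t * a) * (e * a⁻¹) := by rw [hat]
    _ = t * (a * e * a⁻¹) := by simp only [mul_assoc]
  rw [h1]

lemma orth_pp' {u v : S} (hu : u * u = u) (hv : v * v = v) (huv : u * v = 0) :
    Orth u v := by
  constructor
  · rw [idem_inv hv]; exact huv
  · rw [idem_inv hu]; exact huv

lemma orth_pt' {t u v : S} (htt : t * t = 1) (hu : u * u = u) (hv : v * v = v)
    (hut : t * u = u * t) (huv : u * v = 0) : Orth u (t * v) := by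
  constructor
  · rw [mul_inv_rev', idem_inv hv, inv_invol htt, ← mul_assoc, huv, zmul]
  · rw [idem_inv hu]
    calc u * (t * v) = (u * t) * v := by rw [mul_assoc]
    _ = (t * u) * v := by rw [hut]
    _ = t * (u * v) := by rw [mul_assoc]
    _ = 0 := by rw [huv, mulz]

lemma orth_tp' {t u v : S} (htt : t * t = 1) (hu : u * u = u) (hv : v * v = v)
    (hvt : t * v = v * t) (huv : u * v = 0) : Orth (t * u) v := by
  constructor
  · rw [idem_inv hv, mul_assoc, huv, mulz]
  · rw [mul_inv_rev', idem_inv hu, inv_invol htt]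
    calc (u * t) * v = u * (t * v) := by rw [mul_assoc]
    _ = u * (v * t) := by rw [hvt]
    _ = (u * v) * t := by rw [mul_assoc]
    _ = 0 := by rw [huv, zmul]

lemma orth_tt' {t u v : S} (htt : t * t = 1) (hu : u * u = u) (hv : v * v = v)
    (huv : u * v = 0) : Orth (t * u) (t * v) := by
  constructor
  · rw [mul_inv_rev', idem_inv hv, inv_invol htt]
    calc (t * u) * (v * t) = t * ((u * v) * t) := by simp only [mul_assoc]
    _ = 0 := by rw [huv, zmul, mulz]
  · rw [mul_inv_rev', idem_inv hu, inv_invol htt]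
    calc (u * t) * (t * v) = u * ((t * t) * v) := by simp only [mul_assoc]
    _ = u * v := by rw [htt, one_mul]
    _ = 0 := huv

lemma swap_mul {t x y : S} (hx : t * x = x * t) (hy : t * y = y * t) :
    t * (x * y) = (x * y) * t := by
  calc t * (x * y) = (t * x) * y := by rw [mul_assoc]
  _ = x * (t * y) := by rw [hx, mul_assoc]
  _ = x * (y * t) := by rw [hy]
  _ = (x * y) * t := by rw [mul_assoc]

lemma seu_comm {t e e' : S} (htt : t * t = 1) (he : e * e = e) (he' : e' * e' = e')
    (hte : t * e * t = e) (hte' : t * e' * t = e') :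
    seu t e * seu t e' = seu t e' * seu t e := by
  have hce := compl_idem' he
  have hce' := compl_idem' he'
  have hswe := t_swap htt hte
  have hswe' := t_swap htt hte'
  have hswce := t_swap_compl htt he hte
  have hswce' := t_swap_compl htt he' hte'
  have h1 := idem_mul_idem he he'
  have h2 := idem_mul_idem he hce'
  have h3 := idem_mul_idem hce he'
  have h4 := idem_mul_idem hce hce'
  have z12 : (e * e') * (e * bcompl e') = 0 := by
    rw [idem4 he' he, he, mul_compl' he', mulz]
  have z13 : (e * e') * (bcompl e * e') = 0 := by
    rw [idem4 he' hce, mul_compl' he, zmul]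
  have z14 : (e * e') * (bcompl e * bcompl e') = 0 := by
    rw [idem4 he' hce, mul_compl' he, zmul]
  have z23 : (e * bcompl e') * (bcompl e * e') = 0 := by
    rw [idem4 hce' hce, mul_compl' he, zmul]
  have z24 : (e * bcompl e') * (bcompl e * bcompl e') = 0 := by
    rw [idem4 hce' hce, mul_compl' he, zmul]
  have z34 : (bcompl e * e') * (bcompl e * bcompl e') = 0 := by
    rw [idem4 he' hce, hce, mul_compl' he', mulz]
  have hXL : seu t e * seu t e' =
      bsup (bsup (e * e') (t * (e * bcompl e')))
        (bsup (t * (bcompl e * e')) (bcompl e * bcompl e')) := by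
    unfold seu
    rw [bsup_mul _ (seu_compat htt he hte), mul_bsup _ (seu_compat htt he' hte'),
      mul_bsup _ (seu_compat htt he' hte'), te_te htt he hte,
      mul_assoc t e (bcompl e'), ce_te htt he hte]
  have hYL : seu t e' * seu t e =
      bsup (bsup (e * e') (t * (bcompl e * e')))
        (bsup (t * (e * bcompl e')) (bcompl e * bcompl e')) := by
    unfold seu
    rw [bsup_mul _ (seu_compat htt he' hte'), mul_bsup _ (seu_compat htt he hte),
      mul_bsup _ (seu_compat htt he hte), te_te htt he' hte',
      mul_assoc t e' (bcompl e), ce_te htt he' hte']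
    rw [idem_comm he' he, idem_comm he' hce, idem_comm hce' he, idem_comm hce' hce]
  rw [hXL, hYL]
  exact bsup_exchange
    (orth_pt' htt h1 h2 (swap_mul hswe hswe') z12)
    (orth_pt' htt h1 h3 (swap_mul hswe hswe') z13)
    (orth_pp' h1 h4 z14)
    (orth_tt' htt h2 h3 z23)
    (orth_tp' htt h2 h4 (swap_mul hswce hswce') z24)
    (orth_tp' htt h3 h4 (swap_mul hswce hswce') z34)

/-! ### helpers for the main claims -/

lemma comm_inv {a b : S} (ha : IsUnit a) (h : a * b = b * a) : a⁻¹ * b = b * a⁻¹ := by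
  calc a⁻¹ * b = a⁻¹ * (b * a) * a⁻¹ := by rw [mul_assoc, mul_assoc, unit_r ha, mul_one]
  _ = a⁻¹ * (a * b) * a⁻¹ := by rw [h]
  _ = b * a⁻¹ := by rw [← mul_assoc, unit_l ha, one_mul]

lemma conjSet_mul {a b : S} (ha : IsUnit a) (hb : IsUnit b) (F : Set S) :
    conjSet (a * b) F = conjSet a (conjSet b F) := by
  ext y
  rw [mem_conjSet (ha.mul hb), mem_conjSet ha, mem_conjSet hb, mul_inv_rev']
  constructor
  · intro h
    have e1 : b⁻¹ * (a⁻¹ * y * a) * b = b⁻¹ * a⁻¹ * y * (a * b) := by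
      simp only [mul_assoc]
    rw [e1]; exact h
  · intro h
    have e1 : b⁻¹ * a⁻¹ * y * (a * b) = b⁻¹ * (a⁻¹ * y * a) * b := by
      simp only [mul_assoc]
    rw [e1]; exact h

lemma conjSet_one (F : Set S) : conjSet (1 : S) F = F := by
  ext y
  rw [mem_conjSet isUnit_one, inv_one', mul_one, one_mul]

lemma seu_mem_Zset {t e : S} (htt : t * t = 1) (he : e * e = e) (hte : t * e * t = e) :
    seu t e ∈ Zset t := by
  have ht := invol_unit htt
  have hconj : t * seu t e * t⁻¹ = seu t e := by
    rw [inv_invol htt]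
    have h := conj_seu htt he hte ht rfl
    rw [inv_invol htt] at h
    rw [h, hte]
  refine ⟨⟨seu_unit htt he hte, (comm_of_conj_eq ht hconj).symm⟩, seu_sq htt he hte, ?_⟩
  rintro a ⟨hau, hat⟩
  rw [conj_seu htt he hte hau hat]
  have he'' : (a * e * a⁻¹) * (a * e * a⁻¹) = a * e * a⁻¹ := conj_idem he a
  have hte'' : t * (a * e * a⁻¹) * t = a * e * a⁻¹ := by
    have hta : t * a⁻¹ = a⁻¹ * t := (comm_inv hau hat).symm
    calc t * (a * e * a⁻¹) * t = (t * a) * e * (a⁻¹ * t) := by simp only [mul_assoc]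
    _ = (a * t) * e * (t * a⁻¹) := by rw [← hat, ← hta]
    _ = a * (t * e * t) * a⁻¹ := by simp only [mul_assoc]
    _ = a * e * a⁻¹ := by rw [hte]
  exact (seu_comm htt he'' he hte'' hte).symm

/-- Claim 2: elements of `Z_t` are supported inside `σ(t)`. -/
lemma zset_sigma_le (hfund : Fundamental S) (h3 : AxF3 S) {t : S}
    (ht : IsUnit t) (htt : t * t = 1) {s : S} (hs : s ∈ Zset t) :
    sigma s * sigma t = sigma s := by
  obtain ⟨⟨hsu, hst⟩, hss, hconj⟩ := hs
  have hsinv : s⁻¹ = s := inv_invol hss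
  by_cases hE0 : sigma s * phi t = 0
  · have := mul_partition (sigma_idem ht) (sigma s)
    rw [compl_sigma ht, hE0, bsup_zero] at this
    exact this.symm
  · exfalso
    set E := sigma s * phi t with hEdef
    have hEidem : E * E = E := idem_mul_idem (sigma_idem hsu) (phi_idem t)
    have hEs : E * sigma s = E := by
      rw [hEdef]
      calc (sigma s * phi t) * sigma s = sigma s * (phi t * sigma s) := by rw [mul_assoc]
      _ = sigma s * (sigma s * phi t) := by rw [idem_comm (phi_idem t) (sigma_idem hsu)]
      _ = (sigma s * sigma s) * phi t := by rw [mul_assoc]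
      _ = E := by rw [sigma_idem hsu, hEdef]
    have hEphit : E * phi t = E := by
      rw [hEdef, mul_assoc, phi_idem t]
    obtain ⟨f, hfidem, hf0, hfE, hforth⟩ := exists_orth_piece hfund hsu hEidem hE0 hEs
    have hfphit : f * phi t = f := by
      calc f * phi t = (f * E) * phi t := by rw [hfE]
      _ = f * (E * phi t) := by rw [mul_assoc]
      _ = f := by rw [hEphit, hfE]
    obtain ⟨h, hhu, hh2, hhsig⟩ := h3 f hfidem hf0
    have hhf : sigma h * f = sigma h := (nle_idem_iff (sigma_idem hhu) hfidem).mp hhsig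
    have hhphit : sigma h * phi t = sigma h := by
      calc sigma h * phi t = (sigma h * f) * phi t := by rw [hhf]
      _ = sigma h * (f * phi t) := by rw [mul_assoc]
      _ = sigma h := by rw [hfphit, hhf]
    have hhsigt : sigma h * sigma t = 0 := by
      calc sigma h * sigma t = (sigma h * phi t) * sigma t := by rw [hhphit]
      _ = sigma h * (phi t * sigma t) := by rw [mul_assoc]
      _ = 0 := by rw [phi_mul_sigma ht, mulz]
    have hht : h * t = t * h := disjoint_commute hhu ht hhsigt
    have hkey := hconj h ⟨hhu, hht⟩
    -- set h' := s * h * s⁻¹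
    obtain ⟨h', hh'⟩ : ∃ h' : S, h' = s * h * s⁻¹ := ⟨_, rfl⟩
    have hh'u : IsUnit h' := hh' ▸ unit_conj hsu hhu
    have hh'inv : h'⁻¹ = s * h⁻¹ * s⁻¹ := by
      rw [hh', mul_inv_rev', mul_inv_rev', inv_invS, mul_assoc]
    -- step 1 : h' * s * h'⁻¹ = h * s * h⁻¹
    have hstep1 : h' * s * h'⁻¹ = h * s * h⁻¹ := by
      rw [hh'inv, hh', hsinv]
      calc (s * h * s) * s * (s * h⁻¹ * s)
          = s * (h * ((s * s) * (s * (h⁻¹ * s)))) := by simp only [mul_assoc]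
      _ = s * (h * (s * (h⁻¹ * s))) := by rw [hss, one_mul]
      _ = (s * (h * s * h⁻¹)) * s := by simp only [mul_assoc]
      _ = ((h * s * h⁻¹) * s) * s := by rw [hkey]
      _ = (h * s * h⁻¹) * (s * s) := by rw [mul_assoc]
      _ = h * s * h⁻¹ := by rw [hss, mul_one]
    -- step 2 : u := h'⁻¹ * h commutes with s
    have huu : IsUnit (h'⁻¹ * h) := (unit_inv_isUnit hh'u).mul hhu
    have hu_inv : (h'⁻¹ * h)⁻¹ = h⁻¹ * h' := by rw [mul_inv_rev', inv_invS]
    have hstep2 : (h'⁻¹ * h) * s * (h⁻¹ * h') = s := by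
      calc (h'⁻¹ * h) * s * (h⁻¹ * h') = h'⁻¹ * ((h * s * h⁻¹) * h') := by
            simp only [mul_assoc]
      _ = h'⁻¹ * ((h' * s * h'⁻¹) * h') := by rw [hstep1]
      _ = h'⁻¹ * (h' * s * h'⁻¹) * h' := by rw [← mul_assoc]
      _ = s := conj_cancel_l hh'u s
    have hus : (h'⁻¹ * h) * s = s * (h'⁻¹ * h) := by
      refine comm_of_conj_eq huu ?_
      rw [hu_inv]
      exact hstep2
    -- step 3/4 : h'⁻¹ * h = h⁻¹ * h'
    have hsh'inv : s * h'⁻¹ * s⁻¹ = h⁻¹ := by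
      rw [hh'inv, hsinv]
      calc s * (s * h⁻¹ * s) * s = (s * s) * (h⁻¹ * (s * s)) := by simp only [mul_assoc]
      _ = h⁻¹ := by rw [hss, one_mul, mul_one]
    have hu_eq : h'⁻¹ * h = h⁻¹ * h' := by
      have hconjeq : s * (h'⁻¹ * h) * s⁻¹ = h'⁻¹ * h := conj_eq_of_comm hsu hus.symm
      calc h'⁻¹ * h = s * (h'⁻¹ * h) * s⁻¹ := hconjeq.symm
      _ = (s * h'⁻¹ * s⁻¹) * (s * h * s⁻¹) := by
            rw [conj_mul' hsu]
      _ = h⁻¹ * h' := by rw [hsh'inv, ← hh']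
    -- step 5 : h and h' commute
    have hsigh' : sigma h' = s * sigma h * s⁻¹ := by rw [hh', sigma_conj hsu hhu]
    have hsh'f' : sigma h' * (s * f * s⁻¹) = sigma h' := by
      rw [hsigh', conj_mul' hsu, hhf]
    have hdisj' : sigma h * sigma h' = 0 := by
      calc sigma h * sigma h' = (sigma h * f) * (sigma h' * (s * f * s⁻¹)) := by
            rw [hhf, hsh'f']
      _ = (sigma h * sigma h') * (f * (s * f * s⁻¹)) := idem4 hfidem (sigma_idem hh'u)
      _ = 0 := by rw [hforth, mulz]
    have hcomm_hh' : h * h' = h' * h := disjoint_commute hhu hh'u hdisj'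
    -- step 6 : h * h = h' * h'
    have hsq : h * h = h' * h' := by
      calc h * h = (h' * h'⁻¹) * (h * h) := by rw [unit_r hh'u, one_mul]
      _ = h' * ((h'⁻¹ * h) * h) := by simp only [mul_assoc]
      _ = h' * ((h⁻¹ * h') * h) := by rw [hu_eq]
      _ = h' * (h⁻¹ * (h' * h)) := by rw [mul_assoc]
      _ = h' * (h⁻¹ * (h * h')) := by rw [← hcomm_hh']
      _ = (h' * (h⁻¹ * h)) * h' := by simp only [mul_assoc]
      _ = h' * h' := by rw [unit_l hhu, mul_one]
    -- step 7 : conclude h * h = 1, contradiction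
    have hsqconj : h * h = s * (h * h) * s⁻¹ := by
      calc h * h = h' * h' := hsq
      _ = (s * h * s⁻¹) * (s * h * s⁻¹) := by rw [hh']
      _ = s * (h * h) * s⁻¹ := conj_mul' hsu h h
    have hsqf : sigma (h * h) * f = sigma (h * h) := by
      calc sigma (h * h) * f = (sigma (h * h) * sigma h) * f := by rw [sigma_sq_nle hhu]
      _ = sigma (h * h) * (sigma h * f) := by rw [mul_assoc]
      _ = sigma (h * h) := by rw [hhf, sigma_sq_nle hhu]
    have hsqsig : s * sigma (h * h) * s⁻¹ = sigma (h * h) := by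
      rw [← sigma_conj hsu (hhu.mul hhu), ← hsqconj]
    have hsqf' : sigma (h * h) * (s * f * s⁻¹) = sigma (h * h) := by
      calc sigma (h * h) * (s * f * s⁻¹)
          = (s * sigma (h * h) * s⁻¹) * (s * f * s⁻¹) := by rw [hsqsig]
      _ = s * (sigma (h * h) * f) * s⁻¹ := conj_mul' hsu _ _
      _ = sigma (h * h) := by rw [hsqf, hsqsig]
    have hsqzero : sigma (h * h) = 0 := by
      calc sigma (h * h) = (sigma (h * h) * f) * (s * f * s⁻¹) := by rw [hsqf, hsqf']
      _ = sigma (h * h) * (f * (s * f * s⁻¹)) := by rw [mul_assoc]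
      _ = 0 := by rw [hforth, mulz]
    exact hh2 (unit_eq_one_of_sigma_zero (hhu.mul hhu) hsqzero)

/-- Claim 1: if a unit commutes with all of `Z_t` then its square is supported
off `σ(t)`. -/
lemma commZ_perp (hfund : Fundamental S) {t : S} (ht : IsUnit t) (htt : t * t = 1)
    {a : S} (ha : IsUnit a) (hcom : ∀ s ∈ Zset t, a * s = s * a) :
    sigma (a * a) * sigma t = 0 := by
  have hsigt := sigma_idem ht
  have htst : t * sigma t * t = sigma t := by
    have h := conj_sigma_self ht
    rwa [inv_invol htt] at h
  -- (b) a fixes t-invariant idempotents below sigma t, and their t-translates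
  have hfixinv : ∀ e : S, e * e = e → t * e * t = e → e * sigma t = e →
      a * e * a⁻¹ = e ∧ a * (t * e) * a⁻¹ = t * e := by
    intro e he hte hsig
    have hs : seu t e ∈ Zset t := seu_mem_Zset htt he hte
    have hasa : a * seu t e * a⁻¹ = seu t e := conj_eq_of_comm ha (hcom _ hs)
    have hphi : a * bcompl e * a⁻¹ = bcompl e := by
      have h1 := congrArg phi hasa
      rwa [phi_conj ha, phi_seu htt he hte hsig] at h1
    have he1 : a * e * a⁻¹ = e := by
      have h2 := conj_compl ha (compl_idem' he)
      rwa [compl_compl' he, hphi, compl_compl' he] at h2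
    refine ⟨he1, ?_⟩
    calc a * (t * e) * a⁻¹ = a * (seu t e * e) * a⁻¹ := by rw [seu_mul_e htt he hte]
    _ = (a * seu t e * a⁻¹) * (a * e * a⁻¹) := (conj_mul' ha _ _).symm
    _ = seu t e * e := by rw [hasa, he1]
    _ = t * e := seu_mul_e htt he hte
  -- (c) a commutes with t
  obtain ⟨hconj_sig, hconj_tsig⟩ := hfixinv (sigma t) hsigt htst hsigt
  have haphit : a * phi t * a⁻¹ = phi t := by
    rw [← compl_sigma ht, conj_compl ha hsigt, hconj_sig]
  have hphit_t : t * phi t = phi t := idem_fix_l (phi_idem t) (phi_nle t)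
  have ht_phit : phi t * t = phi t := idem_fix_r (phi_idem t) (phi_nle t)
  have hCt : Compat (phi t) (t * sigma t) := by
    refine compat_of_orth ⟨?_, ?_⟩
    · rw [mul_inv_rev', idem_inv hsigt, inv_invol htt, ← mul_assoc,
        phi_mul_sigma ht, zmul]
    · rw [idem_inv (phi_idem t), ← mul_assoc, ht_phit, phi_mul_sigma ht]
  have hTdec : t = bsup (phi t) (t * sigma t) := by
    calc t = t * 1 := (mul_one t).symm
    _ = t * bsup (phi t) (sigma t) := by rw [bsup_phi_sigma ht]
    _ = bsup (t * phi t) (t * sigma t) := mul_bsup t (compat_idem (phi_idem t) hsigt)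
    _ = bsup (phi t) (t * sigma t) := by rw [hphit_t]
  have hat' : a * t * a⁻¹ = t := by
    calc a * t * a⁻¹ = a * bsup (phi t) (t * sigma t) * a⁻¹ := by rw [← hTdec]
    _ = bsup (a * phi t * a⁻¹) (a * (t * sigma t) * a⁻¹) := conj_bsup ha hCt
    _ = bsup (phi t) (t * sigma t) := by rw [haphit, hconj_tsig]
    _ = t := hTdec.symm
  have hat : a * t = t * a := comm_of_conj_eq ha hat'
  -- (d) dichotomy
  have hdich : ∀ F : Set S, IsIdemUltrafilter F → sigma t ∈ F →
      conjSet a F = F ∨ conjSet a F = conjSet t F := by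
    intro F hF hsF
    by_cases hsub : F ⊆ conjSet a F
    · left
      exact (uf_max hF (conj_filt ha (uf_filt hF)) (conj_zero_not_mem ha (uf_zero hF)) hsub).symm
    · right
      obtain ⟨e₀, he₀F, he₀not⟩ := Set.not_subset.mp hsub
      have he₀ := filt_idem (uf_filt hF) he₀F
      have hkey2 : ∀ e ∈ F, t * e * t⁻¹ ∈ conjSet a F := by
        intro e heF
        have he := filt_idem (uf_filt hF) heF
        obtain ⟨m, hm⟩ : ∃ m : S, m = (e * e₀) * sigma t := ⟨_, rfl⟩
        have hmidem : m * m = m := by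
          rw [hm]; exact idem_mul_idem (idem_mul_idem he he₀) hsigt
        have hmF : m ∈ F := by
          rw [hm]; exact filt_mul (uf_filt hF) (filt_mul (uf_filt hF) heF he₀F) hsF
        have hmsig : m * sigma t = m := by rw [hm, mul_assoc, hsigt]
        have hme₀ : m * e₀ = m := by
          rw [hm]
          calc ((e * e₀) * sigma t) * e₀ = (e * e₀) * (sigma t * e₀) := by rw [mul_assoc]
          _ = (e * e₀) * (e₀ * sigma t) := by rw [idem_comm hsigt he₀]
          _ = (e * (e₀ * e₀)) * sigma t := by simp only [mul_assoc]
          _ = (e * e₀) * sigma t := by rw [he₀]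
        have hme : m * e = m := by
          rw [hm]
          calc ((e * e₀) * sigma t) * e = (e * e₀) * (sigma t * e) := by rw [mul_assoc]
          _ = (e * e₀) * (e * sigma t) := by rw [idem_comm hsigt he]
          _ = e * ((e₀ * e) * sigma t) := by simp only [mul_assoc]
          _ = e * ((e * e₀) * sigma t) := by rw [idem_comm he₀ he]
          _ = (e * e) * (e₀ * sigma t) := by simp only [mul_assoc]
          _ = (e * e₀) * sigma t := by rw [he, mul_assoc]
        obtain ⟨n, hn⟩ : ∃ n : S, n = t * m * t⁻¹ := ⟨_, rfl⟩
        have hnidem : n * n = n := by rw [hn]; exact conj_idem hmidem t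
        have hC_mn := compat_idem hmidem hnidem
        obtain ⟨M, hM⟩ : ∃ M : S, M = bsup m n := ⟨_, rfl⟩
        have hMidem : M * M = M := by rw [hM]; exact bsup_idem hmidem hnidem
        have htMt : t * M * t⁻¹ = M := by
          rw [hM, conj_bsup ht hC_mn, ← hn]
          have htnt : t * n * t⁻¹ = m := by
            rw [hn, inv_invol htt]
            calc t * (t * m * t) * t = (t * t) * (m * (t * t)) := by simp only [mul_assoc]
            _ = m := by rw [htt, one_mul, mul_one]
          rw [htnt]
          exact bsup_comm (compat_idem hnidem hmidem)
        have hMsig : M * sigma t = M := by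
          have hnsig : n * sigma t = n := by
            calc n * sigma t = n * (t * sigma t * t⁻¹) := by rw [conj_sigma_self ht]
            _ = (t * m * t⁻¹) * (t * sigma t * t⁻¹) := by rw [hn]
            _ = t * (m * sigma t) * t⁻¹ := conj_mul' ht _ _
            _ = n := by rw [hmsig, hn]
          rw [hM, bsup_mul _ hC_mn, hmsig, hnsig]
        have htMt' : t * M * t = M := by
          have h := htMt
          rwa [inv_invol htt] at h
        have hMfix : a * M * a⁻¹ = M := (hfixinv M hMidem htMt' hMsig).1
        have hMF : M ∈ F :=
          filt_up (uf_filt hF) hmF hMidem (by rw [hM]; exact le_bsup_left hC_mn)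
        have hMconj : M ∈ conjSet a F := ⟨M, hMF, hMfix⟩
        have hprime : m ∈ conjSet a F ∨ n ∈ conjSet a F := by
          rw [hM] at hMconj
          exact uf_prime (conj_uf ha hF) hmidem hnidem hMconj
        rcases hprime with hmc | hnc
        · exact absurd (filt_up' (uf_filt (conj_uf ha hF)) hmc he₀ hme₀) he₀not
        · refine filt_up' (uf_filt (conj_uf ha hF)) hnc (conj_idem he t) ?_
          rw [hn]
          calc (t * m * t⁻¹) * (t * e * t⁻¹) = t * (m * e) * t⁻¹ := conj_mul' ht _ _
          _ = t * m * t⁻¹ := by rw [hme]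
      have hsub2 : conjSet t F ⊆ conjSet a F := by
        rintro y ⟨e, heF, rfl⟩
        exact hkey2 e heF
      exact (uf_max (conj_uf ht hF) (conj_filt ha (uf_filt hF))
        (conj_zero_not_mem ha (uf_zero hF)) hsub2).symm
  -- (e) a² fixes all ultrafilters containing σ(t)
  have haafix : ∀ F : Set S, IsIdemUltrafilter F → sigma t ∈ F →
      conjSet (a * a) F = F := by
    intro F hF hsF
    rw [conjSet_mul ha ha]
    rcases hdich F hF hsF with hl | hr
    · rw [hl, hl]
    · rw [hr, ← conjSet_mul ha ht, hat, conjSet_mul ht ha, hr, ← conjSet_mul ht ht, htt,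
        conjSet_one]
  -- (f) conclusion
  by_contra hne
  obtain ⟨E, hE⟩ : ∃ E : S, E = sigma (a * a) * sigma t := ⟨_, rfl⟩
  have hEidem : E * E = E := by
    rw [hE]; exact idem_mul_idem (sigma_idem (ha.mul ha)) hsigt
  have hEne : E ≠ 0 := by rw [hE]; exact hne
  have hEsig : E * sigma (a * a) = E := by
    rw [hE]
    calc (sigma (a * a) * sigma t) * sigma (a * a)
        = sigma (a * a) * (sigma t * sigma (a * a)) := by rw [mul_assoc]
    _ = sigma (a * a) * (sigma (a * a) * sigma t) := by
          rw [idem_comm hsigt (sigma_idem (ha.mul ha))]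
    _ = (sigma (a * a) * sigma (a * a)) * sigma t := by simp only [mul_assoc]
    _ = sigma (a * a) * sigma t := by rw [sigma_idem (ha.mul ha)]
  obtain ⟨F, hF, hEF, hmoved⟩ := exists_moved_uf hfund (ha.mul ha) hEidem hEne hEsig
  have hsigF : sigma t ∈ F := by
    refine filt_up' (uf_filt hF) hEF hsigt ?_
    rw [hE, mul_assoc, hsigt]
  exact hmoved (haafix F hF hsigF)

end Aux
/-- In a fundamental Boolean inverse ∧-monoid satisfying
(F1), (F2) and (F3), for every non-trivial involution `t` we have
`W_t = U(σ(t)) = {g ∈ U(S) : σ(g) ≤ σ(t)}`. -/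
theorem statement19 [BooleanInverseMeetMonoid S]
    (hfund : Fundamental S) (h1 : AxF1 S) (h2 : AxF2 S) (h3 : AxF3 S)
    (t : S) (ht : IsUnit t) (htt : t * t = 1) (hnt : t ≠ 1) :
    Wset t = {g : S | IsUnit g ∧ nle (sigma g) (sigma t)} := by
  ext a
  constructor
  · rintro ⟨hau, hacomm⟩
    refine ⟨hau, ?_⟩
    have key : sigma a * phi t = 0 := by
      by_contra hne
      obtain ⟨E, hE⟩ : ∃ E : S, E = sigma a * phi t := ⟨_, rfl⟩
      have hEidem : E * E = E := by
        rw [hE]; exact idem_mul_idem (sigma_idem hau) (phi_idem t)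
      have hEne : E ≠ 0 := by rw [hE]; exact hne
      have hEsig : E * sigma a = E := by
        rw [hE]
        calc (sigma a * phi t) * sigma a = sigma a * (phi t * sigma a) := by rw [mul_assoc]
        _ = sigma a * (sigma a * phi t) := by rw [idem_comm (phi_idem t) (sigma_idem hau)]
        _ = (sigma a * sigma a) * phi t := by simp only [mul_assoc]
        _ = sigma a * phi t := by rw [sigma_idem hau]
      have hEphit : E * phi t = E := by rw [hE, mul_assoc, phi_idem t]
      obtain ⟨f, hfidem, hf0, hfE, hforth⟩ := exists_orth_piece hfund hau hEidem hEne hEsig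
      have hfphit : f * phi t = f := by
        calc f * phi t = (f * E) * phi t := by rw [hfE]
        _ = f * (E * phi t) := by rw [mul_assoc]
        _ = f := by rw [hEphit, hfE]
      obtain ⟨h, hhu, hh2, hhsig⟩ := h3 f hfidem hf0
      have hhf : sigma h * f = sigma h := (nle_idem_iff (sigma_idem hhu) hfidem).mp hhsig
      have hhphit : sigma h * phi t = sigma h := by
        calc sigma h * phi t = (sigma h * f) * phi t := by rw [hhf]
        _ = sigma h * (f * phi t) := by rw [mul_assoc]
        _ = sigma h := by rw [hfphit, hhf]
      have hhZ : ∀ s ∈ Zset t, h * s = s * h := by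
        intro s hs
        have hsu : IsUnit s := hs.1.1
        have hss : sigma s * sigma t = sigma s := zset_sigma_le hfund h3 ht htt hs
        have hdisj : sigma h * sigma s = 0 := by
          calc sigma h * sigma s = (sigma h * phi t) * (sigma s * sigma t) := by
                rw [hhphit, hss]
          _ = (sigma h * sigma s) * (phi t * sigma t) := idem4 (phi_idem t) (sigma_idem hsu)
          _ = 0 := by rw [phi_mul_sigma ht, mulz]
        exact disjoint_commute hhu hsu hdisj
      have hmem : (h * h) ∈ Sset t := ⟨h, hhu, rfl, hhZ⟩
      have hconj2 : a * (h * h) * a⁻¹ = h * h := conj_eq_of_comm hau (hacomm (h * h) hmem)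
      have hsig2 : sigma (h * h) * f = sigma (h * h) := by
        calc sigma (h * h) * f = (sigma (h * h) * sigma h) * f := by rw [sigma_sq_nle hhu]
        _ = sigma (h * h) * (sigma h * f) := by rw [mul_assoc]
        _ = sigma (h * h) := by rw [hhf, sigma_sq_nle hhu]
      have hsigconj : a * sigma (h * h) * a⁻¹ = sigma (h * h) := by
        rw [← sigma_conj hau (hhu.mul hhu), hconj2]
      have hsigafa : sigma (h * h) * (a * f * a⁻¹) = sigma (h * h) := by
        calc sigma (h * h) * (a * f * a⁻¹)
            = (a * sigma (h * h) * a⁻¹) * (a * f * a⁻¹) := by rw [hsigconj]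
        _ = a * (sigma (h * h) * f) * a⁻¹ := conj_mul' hau _ _
        _ = sigma (h * h) := by rw [hsig2, hsigconj]
      have hzero : sigma (h * h) = 0 := by
        calc sigma (h * h) = (sigma (h * h) * f) * (a * f * a⁻¹) := by rw [hsig2, hsigafa]
        _ = sigma (h * h) * (f * (a * f * a⁻¹)) := by rw [mul_assoc]
        _ = 0 := by rw [hforth, mulz]
      exact hh2 (unit_eq_one_of_sigma_zero (hhu.mul hhu) hzero)
    have hfin : sigma a * sigma t = sigma a := by
      have hp := mul_partition (sigma_idem ht) (sigma a)
      rw [compl_sigma ht, key, bsup_zero] at hp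
      exact hp.symm
    exact nle_of_idem_mul (sigma_idem hau) (sigma_idem ht) hfin
  · rintro ⟨hgu, hgle⟩
    refine ⟨hgu, ?_⟩
    rintro b ⟨c, hcu, rfl, hccomm⟩
    have hperp : sigma (c * c) * sigma t = 0 := commZ_perp hfund ht htt hcu hccomm
    have hgt : sigma a * sigma t = sigma a :=
      (nle_idem_iff (sigma_idem hgu) (sigma_idem ht)).mp hgle
    have hdisj : sigma a * sigma (c * c) = 0 := by
      calc sigma a * sigma (c * c) = (sigma a * sigma t) * sigma (c * c) := by rw [hgt]
      _ = sigma a * (sigma t * sigma (c * c)) := by rw [mul_assoc]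
      _ = sigma a * (sigma (c * c) * sigma t) := by
            rw [idem_comm (sigma_idem ht) (sigma_idem (hcu.mul hcu))]
      _ = 0 := by rw [hperp, mulz]
    exact disjoint_commute hgu (hcu.mul hcu) hdisj

end Statement19
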